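/- arXiv:2106.06730 — 6 statements merged into one kernel-verified Lean document; each statement's English description precedes it below -/
import Mathlib

section
/- Let Z be a finite set of points in projective n-space satisfying the Cayley-Bacharach property CB(i), and let j be an integer with 0 ≤ j ≤ i+1. Then the sum Dh_Z(0) + Dh_Z(1) + ... + Dh_Z(j) is at most Dh_Z(i+1-j) + ... + Dh_Z(i+1), where Dh_Z denotes the first difference of the Hilbert function of Z. -/
open MvPolynomial

noncomputable section

/-- Projective n-space over ℂ. -/
abbrev Pn (n : ℕ) := Projectivization ℂ (Fin (n + 1) → ℂ)

/-- Evaluation of a polynomial at a vector, as a linear map. -/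
noncomputable def evalAt {n : ℕ} (v : Fin (n + 1) → ℂ) :
    MvPolynomial (Fin (n + 1)) ℂ →ₗ[ℂ] ℂ :=
  (MvPolynomial.aeval v).toLinearMap

/-- The degree-`j` homogeneous piece of the polynomial ring `R = ℂ[x_0,…,x_n]`. -/
abbrev Rdeg (n j : ℕ) : Submodule ℂ (MvPolynomial (Fin (n + 1)) ℂ) :=
  MvPolynomial.homogeneousSubmodule (Fin (n + 1)) ℂ j

/-- Evaluation of degree-`j` forms at the points of a finite set `Z ⊂ ℙⁿ`
(using chosen representatives; its rank does not depend on the choice). -/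
noncomputable def evalMap {n : ℕ} (Z : Finset (Pn n)) (j : ℕ) :
    (Rdeg n j) →ₗ[ℂ] (Z → ℂ) :=
  (LinearMap.pi fun z : Z => evalAt (z : Pn n).rep).comp (Rdeg n j).subtype

/-- Hilbert function of a finite set of points `Z ⊂ ℙⁿ`. -/
noncomputable def hilb {n : ℕ} (Z : Finset (Pn n)) (j : ℕ) : ℕ :=
  Module.finrank ℂ (LinearMap.range (evalMap Z j))

/-- First difference of the Hilbert function (the `h`-vector entries). -/
noncomputable def Dh {n : ℕ} (Z : Finset (Pn n)) : ℕ → ℕ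
  | 0 => hilb Z 0
  | (j + 1) => hilb Z (j + 1) - hilb Z j

/-- The Cayley–Bacharach property `CB(i)`: every degree-`i` form vanishing on
`Z ∖ {P}` also vanishes at `P`, for every `P ∈ Z`. -/
def CB {n : ℕ} (Z : Finset (Pn n)) (i : ℕ) : Prop :=
  ∀ P ∈ Z, ∀ f ∈ Rdeg n i,
    (∀ Q ∈ Z, Q ≠ P → evalAt (Q : Pn n).rep f = 0) → evalAt P.rep f = 0

/-- The `d`-th power of the linear form corresponding to a point `P ∈ ℙⁿ`,
i.e. the image of `P` under the degree-`d` Veronese map (rep-scaled). -/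
noncomputable def powForm (n d : ℕ) (P : Pn n) : MvPolynomial (Fin (n + 1)) ℂ :=
  (∑ i, P.rep i • MvPolynomial.X i) ^ d

/-- `A` computes (is a decomposition of) the degree-`d` form `T`:
`T` lies in the span of the `d`-th powers of the linear forms given by `A`. -/
def computes (n d : ℕ) (A : Finset (Pn n)) (T : MvPolynomial (Fin (n + 1)) ℂ) : Prop :=
  T ∈ Submodule.span ℂ (powForm n d '' (A : Set (Pn n)))

/-- `A` is a non-redundant decomposition of `T`. -/
def nonRedundant (n d : ℕ) (A : Finset (Pn n)) (T : MvPolynomial (Fin (n + 1)) ℂ) : Prop :=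
  computes n d A T ∧ ∀ A' : Finset (Pn n), A' ⊂ A → ¬ computes n d A' T

/-- The `d`-th Kruskal rank of `A` is `≥ k`: all subsets of `v_d(A)` of
cardinality at most `k` are linearly independent. -/
def kruskalGe (n d : ℕ) (A : Finset (Pn n)) (k : ℕ) : Prop :=
  ∀ S : Finset (Pn n), S ⊆ A → S.card ≤ k →
    LinearIndependent ℂ (fun P : S => powForm n d P.1)

/-- Quadrics through `A`. -/
def quadricsThrough (n : ℕ) (A : Finset (Pn n)) : Set (MvPolynomial (Fin (n + 1)) ℂ) :=
  {f | f ∈ Rdeg n 2 ∧ ∀ P ∈ A, evalAt P.rep f = 0}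

/-- Base locus of the linear system of quadric hypersurfaces through `A`. -/
def baseLocusQ (n : ℕ) (A : Finset (Pn n)) : Set (Pn n) :=
  {Q | ∀ f ∈ quadricsThrough n A, evalAt Q.rep f = 0}

/-- Waring rank of a form `T`. -/
noncomputable def waringRank (n d : ℕ) (T : MvPolynomial (Fin (n + 1)) ℂ) : ℕ :=
  sInf {r | ∃ B : Finset (Pn n), B.card = r ∧ computes n d B T}

/-- Degree-`d` graded piece of the homogeneous ideal of `Z`. -/
noncomputable def idealDeg (n : ℕ) (Z : Finset (Pn n)) (d : ℕ) :
    Submodule ℂ (MvPolynomial (Fin (n + 1)) ℂ) :=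
  Rdeg n d ⊓ ⨅ P ∈ Z, LinearMap.ker (evalAt (P : Pn n).rep)

end

open scoped Classical

/-! ### Auxiliary development for the proof of `stmt0` -/

noncomputable section AuxGKR

set_option maxHeartbeats 1000000
set_option synthInstance.maxHeartbeats 400000

variable {n : ℕ}

/-- The image of the degree-`d` evaluation map, as a submodule of `↥Z → ℂ`. -/
abbrev Wsp (Z : Finset (Pn n)) (d : ℕ) : Submodule ℂ (↥Z → ℂ) :=
  LinearMap.range (evalMap Z d)

lemma hilb_def (Z : Finset (Pn n)) (d : ℕ) :
    hilb Z d = Module.finrank ℂ (Wsp Z d) := rfl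

lemma evalMap_apply (Z : Finset (Pn n)) (d : ℕ) (f : ↥(Rdeg n d)) (q : ↥Z) :
    evalMap Z d f q = evalAt (q : Pn n).rep f.1 := rfl

lemma mem_Wsp {Z : Finset (Pn n)} {d : ℕ} {x : ↥Z → ℂ} :
    x ∈ Wsp Z d ↔ ∃ f ∈ Rdeg n d, ∀ q : ↥Z, x q = evalAt (q : Pn n).rep f := by
  constructor
  · rintro ⟨f, rfl⟩
    exact ⟨f.1, f.2, fun q => rfl⟩
  · rintro ⟨f, hf, hx⟩
    exact ⟨⟨f, hf⟩, by funext q; exact (hx q).symm⟩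

/-- `P` admits a separator of degree `d` in `Z`. -/
def SepPt (Z : Finset (Pn n)) (d : ℕ) (P : Pn n) : Prop :=
  ∃ f ∈ Rdeg n d, (∀ Q ∈ Z, Q ≠ P → evalAt (Q : Pn n).rep f = 0) ∧ evalAt P.rep f ≠ 0

lemma CB.not_sep {Z : Finset (Pn n)} {i : ℕ} (h : CB Z i) {P : Pn n} (hP : P ∈ Z) :
    ¬ SepPt Z i P := by
  rintro ⟨f, hf, hvan, hne⟩
  exact hne (h P hP f hf hvan)

/-- A nonzero vector has a nonzero coordinate. -/
lemma exists_coord_ne_zero {v : Fin (n + 1) → ℂ} (hv : v ≠ 0) : ∃ k, v k ≠ 0 := by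
  by_contra hc
  push_neg at hc
  exact hv (funext fun k => hc k)

lemma evalAt_mul (v : Fin (n + 1) → ℂ) (f g : MvPolynomial (Fin (n + 1)) ℂ) :
    evalAt v (f * g) = evalAt v f * evalAt v g := by
  simp [evalAt]

lemma evalAt_pow (v : Fin (n + 1) → ℂ) (f : MvPolynomial (Fin (n + 1)) ℂ) (m : ℕ) :
    evalAt v (f ^ m) = (evalAt v f) ^ m := by
  simp [evalAt]

lemma X_pow_mem (k : Fin (n + 1)) (m : ℕ) :
    (X k : MvPolynomial (Fin (n + 1)) ℂ) ^ m ∈ Rdeg n m := by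
  rw [mem_homogeneousSubmodule]
  simpa using (isHomogeneous_X ℂ k).pow m

lemma mul_mem_Rdeg {a b : ℕ} {f g : MvPolynomial (Fin (n + 1)) ℂ}
    (hf : f ∈ Rdeg n a) (hg : g ∈ Rdeg n b) : f * g ∈ Rdeg n (a + b) := by
  rw [mem_homogeneousSubmodule] at *
  exact hf.mul hg

/-- Separators propagate to higher degrees. -/
lemma SepPt.up {Z : Finset (Pn n)} {d e : ℕ} {P : Pn n} (hde : d ≤ e) (h : SepPt Z d P) :
    SepPt Z e P := by
  obtain ⟨f, hf, hvan, hne⟩ := h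
  obtain ⟨k, hk⟩ := exists_coord_ne_zero P.rep_nonzero
  refine ⟨f * X k ^ (e - d), ?_, ?_, ?_⟩
  · have := mul_mem_Rdeg hf (X_pow_mem k (e - d))
    rwa [Nat.add_sub_cancel' hde] at this
  · intro Q hQ hQP
    rw [evalAt_mul, hvan Q hQ hQP, zero_mul]
  · rw [evalAt_mul, evalAt_pow]
    refine mul_ne_zero hne (pow_ne_zero _ ?_)
    simpa [evalAt] using hk

/-- Avoiding finitely many nonzero functionals (escape lemma). -/
lemma escape {V : Type*} [AddCommGroup V] [Module ℂ V] {ι : Type*}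
    (S : Finset ι) (φ : ι → V →ₗ[ℂ] ℂ)
    (h : ∀ i ∈ S, ∃ v, φ i v ≠ 0) : ∃ v, ∀ i ∈ S, φ i v ≠ 0 := by
  classical
  induction S using Finset.induction with
  | empty => exact ⟨0, by simp⟩
  | @insert a s ha ih =>
    obtain ⟨u, hu⟩ := ih (fun i hi => h i (Finset.mem_insert_of_mem hi))
    obtain ⟨v, hv⟩ := h a (Finset.mem_insert_self a s)
    set B : Finset ℂ :=
      ((insert a s).filter (fun i => φ i v ≠ 0)).image (fun i => -(φ i u) / (φ i v)) with hB
    obtain ⟨c, hc⟩ := Infinite.exists_notMem_finset B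
    refine ⟨u + c • v, ?_⟩
    intro i hi
    rw [map_add, map_smul, smul_eq_mul]
    intro hzero
    by_cases hiv : φ i v = 0
    · rcases Finset.mem_insert.1 hi with rfl | his
      · exact hv hiv
      · rw [hiv, mul_zero, add_zero] at hzero
        exact hu i his hzero
    · apply hc
      rw [hB]
      refine Finset.mem_image.2 ⟨i, Finset.mem_filter.2 ⟨hi, hiv⟩, ?_⟩
      rw [div_eq_iff hiv]
      linear_combination -hzero

/-- The coordinatewise (Hadamard) multiplication by a fixed vector, as a linear map. -/
def had {Z : Finset (Pn n)} (l : ↥Z → ℂ) : (↥Z → ℂ) →ₗ[ℂ] (↥Z → ℂ) :=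
  LinearMap.pi fun q : ↥Z => l q • LinearMap.proj q

lemma had_apply {Z : Finset (Pn n)} (l x : ↥Z → ℂ) (q : ↥Z) :
    had l x q = l q * x q := rfl

/-- The dot-product pairing on `↥Z → ℂ`. -/
def pairZ (Z : Finset (Pn n)) : (↥Z → ℂ) →ₗ[ℂ] (↥Z → ℂ) →ₗ[ℂ] ℂ :=
  LinearMap.mk₂ ℂ (fun l x => ∑ q, l q * x q)
    (fun l₁ l₂ x => by simp [add_mul, Finset.sum_add_distrib])
    (fun c l x => by simp [Finset.mul_sum, mul_assoc])
    (fun l x₁ x₂ => by simp [mul_add, Finset.sum_add_distrib])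
    (fun c l x => by simp [Finset.mul_sum, mul_assoc, mul_left_comm])

lemma pairZ_apply (Z : Finset (Pn n)) (l x : ↥Z → ℂ) :
    pairZ Z l x = ∑ q, l q * x q := rfl

/-- Rewrite a functional as a dot product against single vectors. -/
lemma functional_eq_sum {Z : Finset (Pn n)} (φ : (↥Z → ℂ) →ₗ[ℂ] ℂ) (w : ↥Z → ℂ) :
    ∑ q, φ (Pi.single q 1) * w q = φ w := by
  have hw : w = ∑ q : ↥Z, w q • (Pi.single q (1 : ℂ) : ↥Z → ℂ) := by
    funext r
    rw [Finset.sum_apply]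
    simp [Pi.single_apply]
  conv_rhs => rw [hw]
  rw [map_sum]
  exact Finset.sum_congr rfl fun q _ => by rw [map_smul, smul_eq_mul, mul_comm]

/-- Pairing against the degree-`d` evaluation image, as a map to the dual. -/
def toDualW (Z : Finset (Pn n)) (d : ℕ) :
    (↥Z → ℂ) →ₗ[ℂ] Module.Dual ℂ ↥(Wsp Z d) :=
  ((Wsp Z d).subtype.dualMap).comp (pairZ Z)

lemma toDualW_apply (Z : Finset (Pn n)) (d : ℕ) (l : ↥Z → ℂ) (w : ↥(Wsp Z d)) :
    toDualW Z d l w = ∑ q, l q * (w : ↥Z → ℂ) q := rfl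

/-- The perp space of the degree-`d` evaluation image. -/
def perp (Z : Finset (Pn n)) (d : ℕ) : Submodule ℂ (↥Z → ℂ) :=
  LinearMap.ker (toDualW Z d)

lemma mem_perp {Z : Finset (Pn n)} {d : ℕ} {l : ↥Z → ℂ} :
    l ∈ perp Z d ↔ ∀ w ∈ Wsp Z d, ∑ q, l q * w q = 0 := by
  rw [perp, LinearMap.mem_ker]
  constructor
  · intro h w hw
    have := congrFun (congrArg (fun (t : Module.Dual ℂ ↥(Wsp Z d)) =>
      (t : ↥(Wsp Z d) → ℂ)) h) ⟨w, hw⟩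
    simpa [toDualW_apply] using this
  · intro h
    ext w
    simpa [toDualW_apply] using h w.1 w.2

/-- If `P` has no degree-`d` separator, there is a perp vector not vanishing at `P`. -/
lemma exists_perp_ne {Z : Finset (Pn n)} {d : ℕ} (P : ↥Z) (h : ¬ SepPt Z d (P : Pn n)) :
    ∃ l ∈ perp Z d, l P ≠ 0 := by
  have hδ : (Pi.single P (1 : ℂ) : ↥Z → ℂ) ∉ Wsp Z d := by
    intro hmem
    obtain ⟨f, hf, hx⟩ := mem_Wsp.1 hmem
    refine h ⟨f, hf, ?_, ?_⟩
    · intro Q hQ hQP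
      have hne : (⟨Q, hQ⟩ : ↥Z) ≠ P := by
        intro he
        exact hQP (congrArg Subtype.val he)
      rw [← hx ⟨Q, hQ⟩, Pi.single_eq_of_ne hne]
    · rw [← hx P, Pi.single_eq_same]
      exact one_ne_zero
  set W := Wsp Z d with hW
  have h1 : W.mkQ (Pi.single P (1 : ℂ) : ↥Z → ℂ) ≠ 0 := by
    rw [Submodule.mkQ_apply, Ne, Submodule.Quotient.mk_eq_zero]
    exact hδ
  obtain ⟨ψ, hψ⟩ : ∃ ψ : Module.Dual ℂ ((↥Z → ℂ) ⧸ W),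
      ψ (W.mkQ (Pi.single P (1 : ℂ) : ↥Z → ℂ)) ≠ 0 := by
    by_contra hc
    push_neg at hc
    exact h1 ((Module.forall_dual_apply_eq_zero_iff ℂ _).1 hc)
  refine ⟨fun q => (ψ.comp W.mkQ) (Pi.single q 1), ?_, ?_⟩
  · rw [mem_perp]
    intro w hw
    rw [functional_eq_sum (ψ.comp W.mkQ) w]
    simp only [LinearMap.comp_apply, Submodule.mkQ_apply]
    rw [(Submodule.Quotient.mk_eq_zero W).2 hw, map_zero]
  · exact hψ

/-- Existence of a full-support perp vector when no point has a degree-`d` separator. -/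
lemma exists_fullsupport (Z : Finset (Pn n)) (d : ℕ) (h : ∀ P ∈ Z, ¬ SepPt Z d P) :
    ∃ l ∈ perp Z d, ∀ q : ↥Z, l q ≠ 0 := by
  have key : ∀ q : ↥Z, ∃ v : ↥(perp Z d), ((LinearMap.proj q).comp (perp Z d).subtype) v ≠ 0 := by
    intro q
    obtain ⟨l, hl, hlq⟩ := exists_perp_ne q (h q q.2)
    exact ⟨⟨l, hl⟩, hlq⟩
  obtain ⟨v, hv⟩ := escape (Finset.univ : Finset ↥Z)
    (fun q => (LinearMap.proj q).comp (perp Z d).subtype)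
    (fun q _ => key q)
  exact ⟨v.1, v.2, fun q => hv q (Finset.mem_univ q)⟩

/-- Pillar 1: the pairing bound. -/
lemma pillar1 (Z : Finset (Pn n)) (a b : ℕ) (h : ∀ P ∈ Z, ¬ SepPt Z (a + b) P) :
    hilb Z a + hilb Z b ≤ Module.finrank ℂ (↥Z → ℂ) := by
  obtain ⟨l, hl, hlne⟩ := exists_fullsupport Z (a + b) h
  rw [mem_perp] at hl
  -- the pairing map into the dual of `Wsp Z b`
  set D : (↥Z → ℂ) →ₗ[ℂ] Module.Dual ℂ ↥(Wsp Z b) := (toDualW Z b).comp (had l) with hD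
  have hDapply : ∀ (x : ↥Z → ℂ) (w : ↥(Wsp Z b)),
      D x w = ∑ q, l q * x q * (w : ↥Z → ℂ) q := by
    intro x w
    rw [hD, LinearMap.comp_apply, toDualW_apply]
    exact Finset.sum_congr rfl fun q _ => by rw [had_apply]
  -- W_a is contained in the kernel
  have hker : Wsp Z a ≤ LinearMap.ker D := by
    intro x hx
    obtain ⟨f, hf, hxval⟩ := mem_Wsp.1 hx
    rw [LinearMap.mem_ker]
    ext w
    obtain ⟨g, hg, hwval⟩ := mem_Wsp.1 w.2
    rw [hDapply, LinearMap.zero_apply]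
    have hfg : (evalMap Z (a + b)) ⟨f * g, mul_mem_Rdeg hf hg⟩ ∈ Wsp Z (a + b) :=
      LinearMap.mem_range_self _ _
    have hzero := hl _ hfg
    rw [← hzero]
    refine Finset.sum_congr rfl fun q _ => ?_
    rw [hxval q, hwval q, evalMap_apply]
    show l q * evalAt (q : Pn n).rep f * evalAt (q : Pn n).rep g
      = l q * evalAt (q : Pn n).rep (f * g)
    rw [evalAt_mul, mul_assoc]
  -- D is surjective
  have hsurj : Function.Surjective D := by
    intro ψ
    obtain ⟨ψ', hψ'⟩ := LinearMap.exists_extend ψ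
    refine ⟨fun q => (l q)⁻¹ * ψ' (Pi.single q 1), ?_⟩
    ext w
    rw [hDapply]
    have hstep : ∀ q : ↥Z, l q * ((l q)⁻¹ * ψ' (Pi.single q 1)) * (w : ↥Z → ℂ) q
        = ψ' (Pi.single q 1) * (w : ↥Z → ℂ) q := by
      intro q
      rw [mul_inv_cancel_left₀ (hlne q)]
    rw [Finset.sum_congr rfl fun q _ => hstep q, functional_eq_sum ψ' w]
    have := congrFun (congrArg (fun (t : ↥(Wsp Z b) →ₗ[ℂ] ℂ) => (t : ↥(Wsp Z b) → ℂ)) hψ') w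
    simpa using this
  -- counting
  have h1 := LinearMap.finrank_range_add_finrank_ker D
  have h2 : Module.finrank ℂ ↥(LinearMap.range D) = hilb Z b := by
    rw [LinearMap.range_eq_top.2 hsurj, finrank_top, Subspace.dual_finrank_eq]
    rfl
  have h3 : hilb Z a ≤ Module.finrank ℂ ↥(LinearMap.ker D) := by
    rw [hilb_def]
    exact Submodule.finrank_mono hker
  omega

/-- A linear form (as a polynomial) from coefficients. -/
def linForm (c : Fin (n + 1) → ℂ) : MvPolynomial (Fin (n + 1)) ℂ := ∑ k, c k • X k

lemma linForm_mem (c : Fin (n + 1) → ℂ) : linForm c ∈ Rdeg n 1 := by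
  refine Submodule.sum_mem _ fun k _ => Submodule.smul_mem _ _ ?_
  rw [mem_homogeneousSubmodule]
  exact isHomogeneous_X ℂ k

lemma evalAt_linForm (v c : Fin (n + 1) → ℂ) :
    evalAt v (linForm c) = ∑ k, c k * v k := by
  simp [linForm, evalAt]

/-- The dot functional on coefficient space. -/
def dotC (v : Fin (n + 1) → ℂ) : (Fin (n + 1) → ℂ) →ₗ[ℂ] ℂ :=
  ∑ k, v k • LinearMap.proj k

lemma dotC_apply (v c : Fin (n + 1) → ℂ) : dotC v c = ∑ k, c k * v k := by
  rw [dotC, LinearMap.sum_apply]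
  exact Finset.sum_congr rfl fun k _ => by
    rw [LinearMap.smul_apply, LinearMap.proj_apply, smul_eq_mul, mul_comm]

lemma sum_single_mul (a : ℂ) (x : Fin (n + 1)) (v : Fin (n + 1) → ℂ) :
    ∑ k, (Pi.single x a : Fin (n + 1) → ℂ) k * v k = a * v x := by
  rw [Finset.sum_eq_single x (fun k _ hk => by rw [Pi.single_eq_of_ne hk, zero_mul])
    (fun habs => absurd (Finset.mem_univ x) habs)]
  rw [Pi.single_eq_same]

/-- A linear form not vanishing at any point of `Z`. -/
lemma exists_linform (Z : Finset (Pn n)) :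
    ∃ L ∈ Rdeg n 1, ∀ P ∈ Z, evalAt (P : Pn n).rep L ≠ 0 := by
  have hexists : ∀ P ∈ Z, ∃ v, dotC (Projectivization.rep P) v ≠ 0 := by
    intro P _
    obtain ⟨k, hk⟩ := exists_coord_ne_zero P.rep_nonzero
    refine ⟨Pi.single k 1, ?_⟩
    rw [dotC_apply, sum_single_mul, one_mul]
    exact hk
  obtain ⟨c, hc⟩ := escape Z (fun P => dotC P.rep) hexists
  refine ⟨linForm c, linForm_mem c, fun P hP => ?_⟩
  rw [evalAt_linForm]
  have := hc P hP
  rwa [dotC_apply] at this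

/-- Monotonicity of the Hilbert function. -/
lemma hilb_mono (Z : Finset (Pn n)) (d : ℕ) : hilb Z d ≤ hilb Z (d + 1) := by
  obtain ⟨L, hL, hLne⟩ := exists_linform Z
  set lv : ↥Z → ℂ := fun q => evalAt (q : Pn n).rep L with hlv
  have hinj : Function.Injective (had (Z := Z) lv) := by
    intro x y hxy
    funext q
    have := congrFun hxy q
    rw [had_apply, had_apply] at this
    exact mul_left_cancel₀ (hLne q q.2) this
  have hsub : Submodule.map (had lv) (Wsp Z d) ≤ Wsp Z (d + 1) := by
    rintro _ ⟨x, hx, rfl⟩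
    obtain ⟨f, hf, hxval⟩ := mem_Wsp.1 hx
    refine mem_Wsp.2 ⟨L * f, ?_, fun q => ?_⟩
    · have := mul_mem_Rdeg hL hf
      rwa [Nat.add_comm 1 d] at this
    · rw [had_apply, hxval q, evalAt_mul]
  have e1 : hilb Z d = Module.finrank ℂ ↥(Submodule.map (had lv) (Wsp Z d)) :=
    LinearEquiv.finrank_eq (Submodule.equivMapOfInjective (had lv) hinj (Wsp Z d))
  rw [e1, hilb_def]
  exact Submodule.finrank_mono hsub

lemma hilb_mono_le (Z : Finset (Pn n)) {a b : ℕ} (hab : a ≤ b) : hilb Z a ≤ hilb Z b := by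
  induction b, hab using Nat.le_induction with
  | base => exact le_refl _
  | succ b hab ih => exact le_trans ih (hilb_mono Z b)

/-- If every point of `Z` has a degree-`d` separator, the evaluation map is onto. -/
lemma Wsp_eq_top {Z : Finset (Pn n)} {d : ℕ} (h : ∀ P ∈ Z, SepPt Z d P) :
    Wsp Z d = ⊤ := by
  rw [Submodule.eq_top_iff']
  intro y
  have hy : y = ∑ q : ↥Z, y q • (Pi.single q (1 : ℂ) : ↥Z → ℂ) := by
    funext r
    rw [Finset.sum_apply]
    simp [Pi.single_apply]
  rw [hy]
  refine Submodule.sum_mem _ fun q _ => Submodule.smul_mem _ _ ?_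
  obtain ⟨f, hf, hvan, hne⟩ := h q q.2
  have hx : (evalMap Z d) ⟨f, hf⟩ ∈ Wsp Z d := LinearMap.mem_range_self _ _
  have hsingle : (Pi.single q (1 : ℂ) : ↥Z → ℂ)
      = (evalAt (q : Pn n).rep f)⁻¹ • (evalMap Z d) ⟨f, hf⟩ := by
    funext r
    by_cases hrq : r = q
    · subst hrq
      rw [Pi.single_eq_same, Pi.smul_apply, evalMap_apply, smul_eq_mul, inv_mul_cancel₀ hne]
    · rw [Pi.single_eq_of_ne hrq, Pi.smul_apply, evalMap_apply, smul_eq_mul]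
      rw [hvan r r.2 (fun habs => hrq (Subtype.ext habs)), mul_zero]
  rw [hsingle]
  exact Submodule.smul_mem _ _ hx

/-- The restriction linear map to the erased set. -/
def eraseMap (Z : Finset (Pn n)) (P : Pn n) : (↥Z → ℂ) →ₗ[ℂ] (↥(Z.erase P) → ℂ) :=
  LinearMap.funLeft ℂ ℂ (fun q => ⟨q.1, Finset.mem_of_mem_erase q.2⟩)

lemma evalMap_erase (Z : Finset (Pn n)) (P : Pn n) (d : ℕ) :
    evalMap (Z.erase P) d = (eraseMap Z P).comp (evalMap Z d) := rfl

/-- Erasing a non-separated point does not change the Hilbert function. -/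
lemma hilb_erase {Z : Finset (Pn n)} {P : Pn n} (hP : P ∈ Z) {d : ℕ}
    (h : ¬ SepPt Z d P) : hilb (Z.erase P) d = hilb Z d := by
  have hrange : Wsp (Z.erase P) d = Submodule.map (eraseMap Z P) (Wsp Z d) := by
    rw [show Wsp (Z.erase P) d = LinearMap.range (evalMap (Z.erase P) d) from rfl,
      evalMap_erase, LinearMap.range_comp]
  have hinj : ∀ x ∈ Wsp Z d, eraseMap Z P x = 0 → x = 0 := by
    intro x hx hx0
    obtain ⟨f, hf, hxval⟩ := mem_Wsp.1 hx
    have hvan : ∀ Q ∈ Z, Q ≠ P → evalAt (Q : Pn n).rep f = 0 := by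
      intro Q hQ hQP
      have hQe : Q ∈ Z.erase P := Finset.mem_erase.2 ⟨hQP, hQ⟩
      have hzz := congrFun hx0 ⟨Q, hQe⟩
      rw [show eraseMap Z P x ⟨Q, hQe⟩ = x ⟨Q, hQ⟩ from rfl] at hzz
      rw [← hxval ⟨Q, hQ⟩]
      exact hzz
    have hfP : evalAt P.rep f = 0 := by
      by_contra hne
      exact h ⟨f, hf, hvan, hne⟩
    funext q
    rw [hxval q]
    by_cases hqP : (q : Pn n) = P
    · rw [hqP]; exact hfP
    · exact hvan q q.2 hqP
  -- rank computation
  set e : ↥(Wsp Z d) →ₗ[ℂ] (↥(Z.erase P) → ℂ) := (eraseMap Z P).comp (Wsp Z d).subtype with he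
  have hrange2 : LinearMap.range e = Wsp (Z.erase P) d := by
    rw [hrange, he, LinearMap.range_comp, Submodule.range_subtype]
  have hker : LinearMap.ker e = ⊥ := by
    rw [LinearMap.ker_eq_bot']
    intro m hm
    exact Subtype.ext (hinj m.1 m.2 hm)
  have h1 := LinearMap.finrank_range_add_finrank_ker e
  rw [hrange2, hker, finrank_bot, add_zero] at h1
  rw [hilb_def, hilb_def, h1]

/-- A linear form vanishing at `Q` but not at `P`, for distinct projective points. -/
lemma exists_sep_linform {P Q : Pn n} (hQP : Q ≠ P) :
    ∃ L ∈ Rdeg n 1, evalAt Q.rep L = 0 ∧ evalAt P.rep L ≠ 0 := by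
  obtain ⟨k0, hk0⟩ := exists_coord_ne_zero Q.rep_nonzero
  by_cases hall : ∀ x, Q.rep k0 * P.rep x - Q.rep x * P.rep k0 = 0
  · exfalso
    apply hQP
    have hPk0 : P.rep k0 ≠ 0 := by
      intro h0
      have hzero : ∀ x, P.rep x = 0 := by
        intro x
        have hx := hall x
        rw [h0, mul_zero, sub_zero] at hx
        exact (mul_eq_zero.1 hx).resolve_left hk0
      exact P.rep_nonzero (funext hzero)
    have ht : (P.rep k0 / Q.rep k0) ≠ 0 := div_ne_zero hPk0 hk0
    have hPQ : P.rep = (P.rep k0 / Q.rep k0) • Q.rep := by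
      funext x
      have hx : Q.rep k0 * P.rep x = Q.rep x * P.rep k0 := sub_eq_zero.1 (hall x)
      show P.rep x = P.rep k0 / Q.rep k0 * Q.rep x
      field_simp
      linear_combination hx
    obtain ⟨t, ht', hPQ'⟩ : ∃ t : ℂ, t ≠ 0 ∧ Projectivization.rep P = t • Projectivization.rep Q :=
      ⟨_, ht, hPQ⟩
    rw [← Projectivization.mk_rep Q, ← Projectivization.mk_rep P,
      Projectivization.mk_eq_mk_iff']
    refine ⟨t⁻¹, ?_⟩
    rw [hPQ', smul_smul, inv_mul_cancel₀ ht', one_smul]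
  · push_neg at hall
    obtain ⟨x0, hx0⟩ := hall
    set c : Fin (n + 1) → ℂ :=
      (Pi.single x0 (Q.rep k0) : Fin (n + 1) → ℂ) - Pi.single k0 (Q.rep x0) with hc
    have hcsum : ∀ v : Fin (n + 1) → ℂ,
        (∑ k, c k * v k) = Q.rep k0 * v x0 - Q.rep x0 * v k0 := by
      intro v
      have h1 : ∀ k, c k * v k
          = (Pi.single x0 (Q.rep k0) : Fin (n + 1) → ℂ) k * v k
            - (Pi.single k0 (Q.rep x0) : Fin (n + 1) → ℂ) k * v k := by
        intro k
        rw [hc]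
        simp [sub_mul]
      rw [Finset.sum_congr rfl fun k _ => h1 k, Finset.sum_sub_distrib,
        sum_single_mul, sum_single_mul]
    refine ⟨linForm c, linForm_mem c, ?_, ?_⟩
    · rw [evalAt_linForm, hcsum]
      ring
    · rw [evalAt_linForm, hcsum]
      exact hx0

/-- Pillar 2a: erasing a point with no degree-`(i+1)` separator preserves `CB i`. -/
lemma CB_erase {Z : Finset (Pn n)} {i : ℕ} (hCB : CB Z i) {P : Pn n}
    (hns : ¬ SepPt Z (i + 1) P) : CB (Z.erase P) i := by
  intro Q hQ f hf hvan
  have hQZ : Q ∈ Z := Finset.mem_of_mem_erase hQ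
  have hQP : Q ≠ P := (Finset.mem_erase.1 hQ).1
  by_cases hfP : evalAt P.rep f = 0
  · refine hCB Q hQZ f hf ?_
    intro Q' hQ' hQ'Q
    by_cases hQ'P : Q' = P
    · rw [hQ'P]; exact hfP
    · exact hvan Q' (Finset.mem_erase.2 ⟨hQ'P, hQ'⟩) hQ'Q
  · exfalso
    obtain ⟨L, hL, hLQ, hLP⟩ := exists_sep_linform hQP
    refine hns ⟨f * L, ?_, ?_, ?_⟩
    · exact mul_mem_Rdeg hf hL
    · intro Q' hQ' hQ'P
      rw [evalAt_mul]
      by_cases hQ'Q : Q' = Q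
      · rw [hQ'Q, hLQ, mul_zero]
      · rw [hvan Q' (Finset.mem_erase.2 ⟨hQ'P, hQ'⟩) hQ'Q, zero_mul]
    · rw [evalAt_mul]
      exact mul_ne_zero hfP hLP

/-- The main inequality, by induction on the number of points. -/
lemma main_ineq {i : ℕ} : ∀ (N : ℕ) (Z : Finset (Pn n)), Z.card ≤ N → CB Z i →
    ∀ j : ℕ, j ≤ i → hilb Z j + hilb Z (i - j) ≤ hilb Z (i + 1) := by
  intro N
  induction N with
  | zero =>
    intro Z hZ hCB j hj
    have hZe : Z = ∅ := Finset.card_eq_zero.1 (Nat.le_zero.1 hZ)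
    subst hZe
    have hsep : ∀ P ∈ (∅ : Finset (Pn n)), SepPt ∅ (i + 1) P := by simp
    have htop : hilb (∅ : Finset (Pn n)) (i + 1)
        = Module.finrank ℂ (↥(∅ : Finset (Pn n)) → ℂ) := by
      rw [hilb_def, Wsp_eq_top hsep, finrank_top]
    rw [htop]
    have hns : ∀ P ∈ (∅ : Finset (Pn n)), ¬ SepPt ∅ (j + (i - j)) P := by simp
    exact pillar1 ∅ j (i - j) hns
  | succ N ih =>
    intro Z hZ hCB j hj
    by_cases hsep : ∀ P ∈ Z, SepPt Z (i + 1) P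
    · -- case (a): evaluation in degree i+1 is onto
      have htop : hilb Z (i + 1) = Module.finrank ℂ (↥Z → ℂ) := by
        rw [hilb_def, Wsp_eq_top hsep, finrank_top]
      rw [htop]
      have hns : ∀ P ∈ Z, ¬ SepPt Z (j + (i - j)) P := by
        rw [Nat.add_sub_cancel' hj]
        exact fun P hP => hCB.not_sep hP
      exact pillar1 Z j (i - j) hns
    · -- case (b): remove a point with no separator of degree i+1
      push_neg at hsep
      obtain ⟨P, hP, hns⟩ := hsep
      have hcard : (Z.erase P).card ≤ N := by
        have h1 : (Z.erase P).card = Z.card - 1 := Finset.card_erase_of_mem hP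
        have h2 : 1 ≤ Z.card := Finset.card_pos.2 ⟨P, hP⟩
        omega
      have hCB' : CB (Z.erase P) i := CB_erase hCB hns
      have hres := ih (Z.erase P) hcard hCB' j hj
      have e1 : hilb (Z.erase P) j = hilb Z j :=
        hilb_erase hP (fun hs => hns (hs.up (by omega)))
      have e2 : hilb (Z.erase P) (i - j) = hilb Z (i - j) :=
        hilb_erase hP (fun hs => hns (hs.up (by omega)))
      have e3 : hilb (Z.erase P) (i + 1) = hilb Z (i + 1) :=
        hilb_erase hP (fun hs => hns (hs.up (by omega)))
      rw [e1, e2, e3] at hres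
      exact hres

/-- Telescoping for the left-hand sum. -/
lemma sum_Dh (Z : Finset (Pn n)) : ∀ j : ℕ, ∑ t ∈ Finset.range (j + 1), Dh Z t = hilb Z j := by
  intro j
  induction j with
  | zero => simp [Dh]
  | succ j ih =>
    rw [Finset.sum_range_succ, ih]
    show hilb Z j + (hilb Z (j + 1) - hilb Z j) = hilb Z (j + 1)
    have := hilb_mono Z j
    omega

/-- Telescoping for shifted sums. -/
lemma sum_Dh_shift (Z : Finset (Pn n)) (m : ℕ) (hm : 1 ≤ m) :
    ∀ j : ℕ, ∑ t ∈ Finset.range (j + 1), Dh Z (m + t) = hilb Z (m + j) - hilb Z (m - 1) := by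
  intro j
  induction j with
  | zero =>
    simp only [Finset.range_one, Finset.sum_singleton, Nat.add_zero]
    obtain ⟨m', rfl⟩ : ∃ m', m = m' + 1 := ⟨m - 1, by omega⟩
    show hilb Z (m' + 1) - hilb Z m' = hilb Z (m' + 1) - hilb Z (m' + 1 - 1)
    rw [Nat.add_sub_cancel]
  | succ j ih =>
    rw [Finset.sum_range_succ, ih]
    have hd : Dh Z (m + (j + 1)) = hilb Z (m + (j + 1)) - hilb Z (m + j) := by
      show Dh Z ((m + j) + 1) = _
      rfl
    rw [hd]
    have h1 := hilb_mono_le Z (show m - 1 ≤ m + j by omega)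
    have h2 := hilb_mono_le Z (show m + j ≤ m + (j + 1) by omega)
    omega

end AuxGKR

/-- Theorem GKRext. If a finite set `Z ⊂ ℙⁿ` satisfies `CB(i)`
and `0 ≤ j ≤ i+1`, then `Dh_Z(0)+⋯+Dh_Z(j) ≤ Dh_Z(i+1-j)+⋯+Dh_Z(i+1)`. -/
theorem stmt0 (n : ℕ) (Z : Finset (Pn n)) (i j : ℕ) (hCB : CB Z i) (hj : j ≤ i + 1) :
    ∑ t ∈ Finset.range (j + 1), Dh Z t ≤
      ∑ t ∈ Finset.range (j + 1), Dh Z (i + 1 - j + t) := by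
  by_cases hij : j ≤ i
  · have hmain := main_ineq (n := n) Z.card Z le_rfl hCB j hij
    rw [sum_Dh]
    have hm : 1 ≤ i + 1 - j := by omega
    rw [sum_Dh_shift Z (i + 1 - j) hm j]
    have h1 : i + 1 - j + j = i + 1 := by omega
    have h2 : i + 1 - j - 1 = i - j := by omega
    rw [h1, h2]
    have hmono := hilb_mono_le Z (show i - j ≤ i + 1 by omega)
    omega
  · have hji : j = i + 1 := by omega
    subst hji
    have h0 : i + 1 - (i + 1) = 0 := by omega
    simp [h0]
end

section
/- Suppose Z ⊂ P^4 is a finite set of cardinality at most 2r satisfying CB(4), with Dh_Z(0) = 1, Dh_Z(1) = 4, Dh_Z(2) ≥ r-5, and Dh_Z(5) ≥ 1. Then Dh_Z(3) + Dh_Z(4) + Dh_Z(5) = r, Dh_Z(2) = r-5, and ℓ(Z) = 2r. -/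
open MvPolynomial

open scoped Classical

open Module

variable {n : ℕ}

/-- Pointwise product of evaluation vectors of homogeneous forms. -/
lemma range_mul_mem (Z : Finset (Pn n)) {a b : ℕ} {x y : ↥Z → ℂ}
    (hx : x ∈ LinearMap.range (evalMap Z a)) (hy : y ∈ LinearMap.range (evalMap Z b)) :
    x * y ∈ LinearMap.range (evalMap Z (a + b)) := by
  obtain ⟨f, rfl⟩ := hx
  obtain ⟨g, rfl⟩ := hy
  refine ⟨⟨(f : MvPolynomial (Fin (n+1)) ℂ) * (g : MvPolynomial (Fin (n+1)) ℂ),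
    f.2.mul g.2⟩, ?_⟩
  funext z
  show MvPolynomial.aeval (z : Pn n).rep
      ((f : MvPolynomial (Fin (n+1)) ℂ) * (g : MvPolynomial (Fin (n+1)) ℂ))
      = (evalMap Z a f * evalMap Z b g) z
  rw [Pi.mul_apply, map_mul]
  rfl

/-- Separation of a point from a subspace by a dual functional. -/
lemma exists_dual_sep {V : Type*} [AddCommGroup V] [Module ℂ V]
    (W : Submodule ℂ V) (x : V) (hx : x ∉ W) :
    ∃ φ : Module.Dual ℂ V, (∀ w ∈ W, φ w = 0) ∧ φ x ≠ 0 := by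
  have hx0 : W.mkQ x ≠ 0 := by
    simpa [Submodule.mkQ_apply, Submodule.Quotient.mk_eq_zero] using hx
  have hne : ¬ ∀ ψ : Module.Dual ℂ (V ⧸ W), ψ (W.mkQ x) = 0 := by
    rw [Module.forall_dual_apply_eq_zero_iff]; exact hx0
  push_neg at hne
  obtain ⟨ψ, hψ⟩ := hne
  refine ⟨ψ.comp W.mkQ, fun w hw => ?_, hψ⟩
  have hw0 : W.mkQ w = 0 := by
    simpa [Submodule.mkQ_apply, Submodule.Quotient.mk_eq_zero] using hw
  simp [LinearMap.comp_apply, hw0]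

/-- A finite family of nonzero functionals admits a common non-vanishing point. -/
lemma exists_forall_dual_ne_zero {V : Type*} [AddCommGroup V] [Module ℂ V]
    {ι : Type*} (s : Finset ι) (ψ : ι → Module.Dual ℂ V)
    (h : ∀ i ∈ s, ∃ v, ψ i v ≠ 0) : ∃ v, ∀ i ∈ s, ψ i v ≠ 0 := by
  classical
  induction s using Finset.induction_on with
  | empty => exact ⟨0, by simp⟩
  | @insert a s ha ih =>
    obtain ⟨v, hv⟩ := ih (fun i hi => h i (Finset.mem_insert_of_mem hi))
    obtain ⟨w, hw⟩ := h a (Finset.mem_insert_self a s)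
    obtain ⟨t, ht⟩ := Infinite.exists_notMem_finset
      ((insert a s).image fun i => -(ψ i v) / (ψ i w))
    refine ⟨v + t • w, fun i hi => ?_⟩
    rw [map_add, map_smul, smul_eq_mul]
    intro h0
    by_cases hiw : ψ i w = 0
    · rcases Finset.mem_insert.1 hi with rfl | his
      · exact hw hiw
      · rw [hiw, mul_zero, add_zero] at h0; exact hv i his h0
    · apply ht
      refine Finset.mem_image.2 ⟨i, hi, ?_⟩
      rw [div_eq_iff hiw]
      linear_combination -h0

/-- Every dual functional on `ℂ^{n+1}` is realized by a linear form. -/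
lemma exists_linear_form (φ : Module.Dual ℂ (Fin (n + 1) → ℂ)) :
    ∃ ℓ ∈ Rdeg n 1, ∀ v : Fin (n + 1) → ℂ, evalAt v ℓ = φ v := by
  classical
  refine ⟨∑ i, φ (Pi.single i 1) • MvPolynomial.X i, ?_, ?_⟩
  · exact Submodule.sum_mem _ fun i _ => Submodule.smul_mem _ _
      ((MvPolynomial.mem_homogeneousSubmodule _ _).2 (MvPolynomial.isHomogeneous_X _ _))
  · intro v
    have hrepr : v = ∑ i, v i • (Pi.single i 1 : Fin (n + 1) → ℂ) := by
      funext j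
      rw [Finset.sum_apply]
      simp [Pi.single_apply, eq_comm]
    have : evalAt v (∑ i, φ (Pi.single i 1) • MvPolynomial.X i)
        = ∑ i, φ (Pi.single i 1) * v i := by
      rw [map_sum]
      refine Finset.sum_congr rfl fun i _ => ?_
      rw [map_smul]
      simp [evalAt, smul_eq_mul]
    rw [this]
    conv_rhs => rw [hrepr, map_sum]
    refine Finset.sum_congr rfl fun i _ => ?_
    rw [map_smul, smul_eq_mul, mul_comm]

lemma mul_single {ι : Type*} [DecidableEq ι] (P : ι) (y : ι → ℂ) :
    y * Pi.single P 1 = y P • (Pi.single P 1 : ι → ℂ) := by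
  funext z
  by_cases hz : z = P
  · subst hz; simp
  · simp [Pi.single_eq_of_ne hz]




set_option maxHeartbeats 2000000 in
/-- Numerical step: `Z ⊂ ℙ⁴` of cardinality `≤ 2r` satisfying `CB(4)`
with `Dh_Z(0)=1`, `Dh_Z(1)=4`, `Dh_Z(2) ≥ r-5`, `Dh_Z(5) ≥ 1` forces
`Dh_Z(3)+Dh_Z(4)+Dh_Z(5) = r`, `Dh_Z(2) = r-5` and `ℓ(Z) = 2r`. -/
theorem stmt2 (r : ℕ) (Z : Finset (Pn 4)) (hcard : Z.card ≤ 2 * r) (hCB : CB Z 4)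
    (h0 : Dh Z 0 = 1) (h1 : Dh Z 1 = 4) (h2 : r - 5 ≤ Dh Z 2) (h5 : 1 ≤ Dh Z 5) :
    Dh Z 3 + Dh Z 4 + Dh Z 5 = r ∧ Dh Z 2 = r - 5 ∧ Z.card = 2 * r := by
  classical
  -- abbreviations
  set W : ℕ → Submodule ℂ (↥Z → ℂ) := fun j => LinearMap.range (evalMap Z j) with hWdef
  have hW : ∀ j : ℕ, hilb Z j = Module.finrank ℂ (W j) := fun _ => rfl
  have hN : Module.finrank ℂ (↥Z → ℂ) = Z.card := by
    rw [Module.finrank_pi]; exact Fintype.card_coe Z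
  haveI hFD : FiniteDimensional ℂ (↥Z → ℂ) := inferInstance
  haveI hFDdual : FiniteDimensional ℂ (Module.Dual ℂ (↥Z → ℂ)) := inferInstance
  -- product structure
  have hmul : ∀ {a b : ℕ} {x y : ↥Z → ℂ}, x ∈ W a → y ∈ W b → x * y ∈ W (a + b) :=
    fun hx hy => range_mul_mem Z hx hy
  -- a linear form non-vanishing at all points of Z
  have hrepex : ∀ z : ↥Z, ∃ φ : Module.Dual ℂ (Fin (4 + 1) → ℂ), φ (z : Pn 4).rep ≠ 0 := by
    intro z
    by_contra hcon
    push_neg at hcon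
    exact Projectivization.rep_nonzero (z : Pn 4)
      ((Module.forall_dual_apply_eq_zero_iff ℂ _).1 hcon)
  obtain ⟨φL, hφL⟩ := exists_forall_dual_ne_zero (Finset.univ : Finset ↥Z)
    (fun z => Module.Dual.eval ℂ (Fin (4 + 1) → ℂ) (z : Pn 4).rep)
    (fun z _ => by
      obtain ⟨φ, hφ⟩ := hrepex z
      exact ⟨φ, by simpa [Module.Dual.eval_apply] using hφ⟩)
  obtain ⟨ℓ, hℓmem, hℓ⟩ := exists_linear_form (n := 4) φL
  set lv : ↥Z → ℂ := fun z => evalAt (z : Pn 4).rep ℓ with hlvdef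
  have hlvmem : lv ∈ W 1 := ⟨⟨ℓ, hℓmem⟩, rfl⟩
  have hlvne : ∀ z : ↥Z, lv z ≠ 0 := by
    intro z
    have := hφL z (Finset.mem_univ z)
    simp only [Module.Dual.eval_apply] at this
    simpa [hlvdef, hℓ] using this
  -- monotonicity of the Hilbert function
  have hmono : ∀ j : ℕ, hilb Z j ≤ hilb Z (j + 1) := by
    intro j
    have hinj : Function.Injective (LinearMap.mulLeft ℂ lv) := by
      intro x y hxy
      funext z
      have h := congrFun hxy z
      simp only [LinearMap.mulLeft_apply, Pi.mul_apply] at h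
      exact mul_left_cancel₀ (hlvne z) h
    have hmap : (W j).map (LinearMap.mulLeft ℂ lv) ≤ W (j + 1) := by
      rintro _ ⟨x, hx, rfl⟩
      have := hmul hlvmem hx
      rw [LinearMap.mulLeft_apply]
      rwa [Nat.add_comm 1 j] at this
    haveI : FiniteDimensional ℂ ↥(W (j + 1)) := FiniteDimensional.finiteDimensional_submodule _
    calc hilb Z j = Module.finrank ℂ ((W j).map (LinearMap.mulLeft ℂ lv)) := by
          rw [hW j]
          exact LinearEquiv.finrank_eq (Submodule.equivMapOfInjective _ hinj (W j))
      _ ≤ Module.finrank ℂ (W (j + 1)) := Submodule.finrank_mono hmap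
  -- CB(4): no point functional lies in W 4
  have hsingle : ∀ P : ↥Z, (Pi.single P 1 : ↥Z → ℂ) ∉ W 4 := by
    rintro P ⟨f, hf⟩
    have hvan : ∀ Q ∈ Z, Q ≠ (P : Pn 4) → evalAt Q.rep (f : MvPolynomial (Fin (4+1)) ℂ) = 0 := by
      intro Q hQ hne
      have h : evalAt ((⟨Q, hQ⟩ : ↥Z) : Pn 4).rep (f : MvPolynomial (Fin (4+1)) ℂ)
          = (Pi.single P 1 : ↥Z → ℂ) ⟨Q, hQ⟩ := congrFun hf ⟨Q, hQ⟩
      rwa [Pi.single_eq_of_ne (fun hc => hne (congrArg Subtype.val hc))] at h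
    have h0 := hCB (P : Pn 4) P.2 (f : MvPolynomial (Fin (4+1)) ℂ) f.2 hvan
    have h1 : evalAt (P : Pn 4).rep (f : MvPolynomial (Fin (4+1)) ℂ)
        = (Pi.single P 1 : ↥Z → ℂ) P := congrFun hf P
    rw [Pi.single_eq_same, h0] at h1
    exact one_ne_zero h1.symm
  -- key duality estimate
  have hann : ∀ T : Submodule ℂ (↥Z → ℂ),
      Module.finrank ℂ T + Module.finrank ℂ T.dualAnnihilator
        = Module.finrank ℂ (↥Z → ℂ) := by
    intro T
    have h1 := LinearEquiv.finrank_eq (Subspace.quotEquivAnnihilator T)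
    have h2 := Submodule.finrank_quotient_add_finrank T
    omega
  have hTheta : ∀ (u : Module.Dual ℂ (↥Z → ℂ)) (T : Submodule ℂ (↥Z → ℂ)),
      (∀ w ∈ W 2, ∀ x ∈ T, u (w * x) = 0) →
      (∀ w ∈ W 2, (∀ x : ↥Z → ℂ, u (w * x) = 0) → w = 0) →
      hilb Z 2 + Module.finrank ℂ T ≤ Z.card := by
    intro u T hkill hinj
    let Θ₀ : ↥(W 2) →ₗ[ℂ] Module.Dual ℂ (↥Z → ℂ) :=
      { toFun := fun w => u.comp (LinearMap.mulLeft ℂ (w : ↥Z → ℂ))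
        map_add' := by
          intro a b
          ext x
          simp [LinearMap.mulLeft_apply, add_mul]
        map_smul' := by
          intro c a
          ext x
          simp [LinearMap.mulLeft_apply, smul_mul_assoc] }
    have hΘ₀ : ∀ (w : ↥(W 2)) (x : ↥Z → ℂ), Θ₀ w x = u ((w : ↥Z → ℂ) * x) := fun _ _ => rfl
    let Θ : ↥(W 2) →ₗ[ℂ] ↥(T.dualAnnihilator) :=
      Θ₀.codRestrict T.dualAnnihilator (fun w => by
        rw [Submodule.mem_dualAnnihilator]
        intro x hx
        exact hkill (w : ↥Z → ℂ) w.2 x hx)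
    have hΘinj : Function.Injective Θ := by
      intro a b hab
      have h0 : Θ (a - b) = 0 := by rw [map_sub, hab, sub_self]
      have h1 : Θ₀ (a - b) = 0 := congrArg Subtype.val h0
      have h2 : ((a - b : ↥(W 2)) : ↥Z → ℂ) = 0 := by
        refine hinj _ (a - b).2 fun x => ?_
        have hx := LinearMap.congr_fun h1 x
        simpa [hΘ₀, sub_mul] using hx
      have h3 : (a - b : ↥(W 2)) = 0 := Subtype.ext (by simpa using h2)
      rwa [sub_eq_zero] at h3
    have hle : Module.finrank ℂ (W 2) ≤ Module.finrank ℂ T.dualAnnihilator :=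
      LinearMap.finrank_le_finrank_of_injective hΘinj
    have hannT := hann T
    rw [hN] at hannT
    have hh2 := hW 2
    omega
  -- the generic separating functional for W 4
  have hexU : ∀ P : ↥Z, ∃ v : ↥((W 4).dualAnnihilator),
      ((Module.Dual.eval ℂ (↥Z → ℂ) (Pi.single P 1)).comp
        ((W 4).dualAnnihilator).subtype) v ≠ 0 := by
    intro P
    obtain ⟨φ, hφW, hφP⟩ := exists_dual_sep (W 4) _ (hsingle P)
    refine ⟨⟨φ, (Submodule.mem_dualAnnihilator _).2 hφW⟩, ?_⟩
    simpa [Module.Dual.eval_apply] using hφP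
  obtain ⟨uu, huu⟩ := exists_forall_dual_ne_zero (Finset.univ : Finset ↥Z)
    (fun P => (Module.Dual.eval ℂ (↥Z → ℂ) (Pi.single P 1)).comp
      ((W 4).dualAnnihilator).subtype)
    (fun P _ => hexU P)
  set u : Module.Dual ℂ (↥Z → ℂ) := (uu : Module.Dual ℂ (↥Z → ℂ)) with hudef
  have hu4 : ∀ w ∈ W 4, u w = 0 := fun w hw => (Submodule.mem_dualAnnihilator _).1 uu.2 w hw
  have huP : ∀ P : ↥Z, u (Pi.single P 1) ≠ 0 := by
    intro P
    have := huu P (Finset.mem_univ P)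
    simpa [Module.Dual.eval_apply, hudef] using this
  -- 2 * hilb Z 2 ≤ card Z
  have hkey : hilb Z 2 + hilb Z 2 ≤ Z.card := by
    rw [hW 2]
    refine hTheta u (W 2) (fun w hw x hx => hu4 _ (by simpa using hmul hw hx)) ?_
    intro w hw hwx
    funext Q
    have := hwx (Pi.single Q 1)
    rw [mul_single, map_smul, smul_eq_mul] at this
    have := (mul_eq_zero.1 this).resolve_right (huP Q)
    simpa using this
  -- numerology, part 1
  have e0 : hilb Z 0 = 1 := h0
  have e1 : Dh Z 1 = hilb Z 1 - hilb Z 0 := rfl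
  have e2 : Dh Z 2 = hilb Z 2 - hilb Z 1 := rfl
  have e3 : Dh Z 3 = hilb Z 3 - hilb Z 2 := rfl
  have e4 : Dh Z 4 = hilb Z 4 - hilb Z 3 := rfl
  have e5 : Dh Z 5 = hilb Z 5 - hilb Z 4 := rfl
  have m01 : hilb Z 0 ≤ hilb Z 1 := hmono 0
  have m12 : hilb Z 1 ≤ hilb Z 2 := hmono 1
  have m23 : hilb Z 2 ≤ hilb Z 3 := hmono 2
  have m34 : hilb Z 3 ≤ hilb Z 4 := hmono 3
  have m45 : hilb Z 4 ≤ hilb Z 5 := hmono 4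
  have h1v : hilb Z 1 = 5 := by
    rw [e1, e0] at h1
    omega
  have h2v : hilb Z 2 = r ∧ Z.card = 2 * r := by
    rw [e2, h1v] at h2
    constructor <;> omega
  obtain ⟨h2r, hcard2r⟩ := h2v
  -- every point functional lies in W 5
  have hsingle5 : ∀ P : ↥Z, (Pi.single P 1 : ↥Z → ℂ) ∈ W 5 := by
    intro P
    by_contra hP5
    -- first, Pi.single P 1 ∉ W 2
    have hP2 : (Pi.single P 1 : ↥Z → ℂ) ∉ W 2 := by
      intro hP2
      have hc3 : lv * lv * lv ∈ W 3 := hmul (hmul hlvmem hlvmem) hlvmem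
      have h5 : (lv * lv * lv) * Pi.single P 1 ∈ W 5 := by
        simpa using hmul hc3 hP2
      rw [mul_single] at h5
      have hne : (lv * lv * lv) P ≠ 0 := by
        simp only [Pi.mul_apply]
        exact mul_ne_zero (mul_ne_zero (hlvne P) (hlvne P)) (hlvne P)
      exact hP5 (by
        have := Submodule.smul_mem (W 5) ((lv * lv * lv) P)⁻¹ h5
        rwa [inv_smul_smul₀ hne] at this)
    by_cases hcase : ∀ Q : ↥Z, Q ≠ P →
        (Pi.single Q 1 : ↥Z → ℂ) ∉ (W 4 ⊔ (ℂ ∙ (Pi.single P 1 : ↥Z → ℂ)))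
    · -- Case 1: a separating functional vanishing at P
      have hexU' : ∀ Q ∈ Finset.univ.erase P, ∃ v :
          ↥((W 4 ⊔ (ℂ ∙ (Pi.single P 1 : ↥Z → ℂ))).dualAnnihilator),
          ((Module.Dual.eval ℂ (↥Z → ℂ) (Pi.single Q 1)).comp
            ((W 4 ⊔ (ℂ ∙ (Pi.single P 1 : ↥Z → ℂ))).dualAnnihilator).subtype) v ≠ 0 := by
        intro Q hQ
        obtain ⟨φ, hφW, hφQ⟩ := exists_dual_sep _ _ (hcase Q (Finset.mem_erase.1 hQ).1)
        refine ⟨⟨φ, (Submodule.mem_dualAnnihilator _).2 hφW⟩, ?_⟩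
        simpa [Module.Dual.eval_apply] using hφQ
      obtain ⟨vv, hvv⟩ := exists_forall_dual_ne_zero (Finset.univ.erase P)
        (fun Q => (Module.Dual.eval ℂ (↥Z → ℂ) (Pi.single Q 1)).comp
          ((W 4 ⊔ (ℂ ∙ (Pi.single P 1 : ↥Z → ℂ))).dualAnnihilator).subtype)
        hexU'
      set u' : Module.Dual ℂ (↥Z → ℂ) := (vv : Module.Dual ℂ (↥Z → ℂ)) with hu'def
      have hu'kill : ∀ x ∈ (W 4 ⊔ (ℂ ∙ (Pi.single P 1 : ↥Z → ℂ))), u' x = 0 :=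
        fun x hx => (Submodule.mem_dualAnnihilator _).1 vv.2 x hx
      have hu'P : u' (Pi.single P 1) = 0 :=
        hu'kill _ (Submodule.mem_sup_right (Submodule.mem_span_singleton_self _))
      have hu'Q : ∀ Q : ↥Z, Q ≠ P → u' (Pi.single Q 1) ≠ 0 := by
        intro Q hQ
        have := hvv Q (Finset.mem_erase.2 ⟨hQ, Finset.mem_univ Q⟩)
        simpa [Module.Dual.eval_apply, hu'def] using this
      -- apply the duality estimate with T = W 2 ⊔ span (e_P)
      have hbig := hTheta u' (W 2 ⊔ (ℂ ∙ (Pi.single P 1 : ↥Z → ℂ)))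
        (by
          intro w hw x hx
          rcases Submodule.mem_sup.1 hx with ⟨y, hy, z, hz, rfl⟩
          rcases Submodule.mem_span_singleton.1 hz with ⟨c, rfl⟩
          rw [mul_add, map_add]
          have hy4 : u' (w * y) = 0 :=
            hu'kill _ (Submodule.mem_sup_left (by simpa using hmul hw hy))
          have hz4 : u' (w * (c • (Pi.single P 1 : ↥Z → ℂ))) = 0 := by
            rw [mul_smul_comm, mul_single, smul_smul, map_smul, smul_eq_mul, hu'P, mul_zero]
          rw [hy4, hz4, add_zero])
        (by
          intro w hw hwx
          have hcoord : ∀ Q : ↥Z, Q ≠ P → w Q = 0 := by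
            intro Q hQ
            have := hwx (Pi.single Q 1)
            rw [mul_single, map_smul, smul_eq_mul] at this
            exact (mul_eq_zero.1 this).resolve_right (hu'Q Q hQ)
          have hwP : w = w P • (Pi.single P 1 : ↥Z → ℂ) := by
            funext z
            by_cases hz : z = P
            · subst hz; simp
            · rw [hcoord z hz]
              simp [Pi.single_eq_of_ne hz]
          obtain ⟨a, ha⟩ : ∃ a : ℂ, a = w P := ⟨w P, rfl⟩
          rw [← ha] at hwP
          by_cases hw0 : a = 0
          · rw [hwP, hw0, zero_smul]
          · exfalso
            apply hP2
            have hmem2 := Submodule.smul_mem (W 2) a⁻¹ hw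
            rwa [hwP, smul_smul, inv_mul_cancel₀ hw0, one_smul] at hmem2)
      -- numeric contradiction
      haveI : Module.Finite ℂ ↥(W 2 ⊔ (ℂ ∙ (Pi.single P 1 : ↥Z → ℂ))) :=
        FiniteDimensional.finiteDimensional_submodule _
      have hlt : Module.finrank ℂ ↥(W 2)
          < Module.finrank ℂ ↥(W 2 ⊔ (ℂ ∙ (Pi.single P 1 : ↥Z → ℂ))) := by
        refine Submodule.finrank_lt_finrank_of_lt (lt_of_le_of_ne le_sup_left ?_)
        intro hEq
        exact hP2 (hEq ▸ Submodule.mem_sup_right (Submodule.mem_span_singleton_self _))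
      have hh2 := hW 2
      omega
    · -- Case 2: some single Q lies in W 4 ⊔ span (e_P); produce e_P ∈ W 5
      push_neg at hcase
      obtain ⟨Q, hQP, hQmem⟩ := hcase
      rcases Submodule.mem_sup.1 hQmem with ⟨y, hy4, z, hz, hyz⟩
      rcases Submodule.mem_span_singleton.1 hz with ⟨c, rfl⟩
      -- c ≠ 0, else Pi.single Q 1 ∈ W 4
      have hc : c ≠ 0 := by
        rintro rfl
        rw [zero_smul, add_zero] at hyz
        exact hsingle Q (hyz ▸ hy4)
      -- a linear form vanishing at Q but not at P
      have hPnotspan : (P : Pn 4).rep ∉ (ℂ ∙ (Q : Pn 4).rep) := by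
        intro hmem
        rcases Submodule.mem_span_singleton.1 hmem with ⟨a, ha⟩
        have ha0 : a ≠ 0 := by
          rintro rfl
          rw [zero_smul] at ha
          exact Projectivization.rep_nonzero (P : Pn 4) ha.symm
        have hPQ : ((P : Pn 4)) = ((Q : Pn 4)) := by
          conv_lhs => rw [← Projectivization.mk_rep (P : Pn 4)]
          conv_rhs => rw [← Projectivization.mk_rep (Q : Pn 4)]
          rw [Projectivization.mk_eq_mk_iff]
          exact ⟨Units.mk0 a ha0, ha⟩
        exact hQP (Subtype.ext hPQ.symm)
      obtain ⟨φ2, hφ2W, hφ2P⟩ := exists_dual_sep (ℂ ∙ (Q : Pn 4).rep) _ hPnotspan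
      obtain ⟨ℓ2, hℓ2mem, hℓ2⟩ := exists_linear_form (n := 4) φ2
      set l2v : ↥Z → ℂ := fun z => evalAt (z : Pn 4).rep ℓ2 with hl2vdef
      have hl2vmem : l2v ∈ W 1 := ⟨⟨ℓ2, hℓ2mem⟩, rfl⟩
      have hl2vQ : l2v Q = 0 := by
        simp only [hl2vdef]
        rw [hℓ2]
        exact hφ2W _ (Submodule.mem_span_singleton_self _)
      have hl2vP : l2v P ≠ 0 := by
        simp only [hl2vdef]
        rw [hℓ2]
        exact hφ2P
      -- y * l2v ∈ W 5 equals (-c * l2v P) • Pi.single P 1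
      have hy5 : y * l2v ∈ W 5 := by simpa using hmul hy4 hl2vmem
      have hyform : y = (Pi.single Q 1 : ↥Z → ℂ) - c • (Pi.single P 1 : ↥Z → ℂ) := by
        rw [← hyz]; abel
      have hcomp : y * l2v = (-(c * l2v P)) • (Pi.single P 1 : ↥Z → ℂ) := by
        rw [hyform]
        funext z
        by_cases hzQ : z = Q
        · subst hzQ
          simp [hl2vQ, hQP, Pi.single_eq_of_ne hQP]
        · by_cases hzP : z = P
          · subst hzP
            simp [Pi.single_eq_of_ne hzQ, Pi.single_eq_same]
            try ring
          · simp [Pi.single_eq_of_ne hzQ, Pi.single_eq_of_ne hzP]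
      rw [hcomp] at hy5
      have hne : (-(c * l2v P)) ≠ 0 := by
        simp [hc, hl2vP]
      apply hP5
      have := Submodule.smul_mem (W 5) (-(c * l2v P))⁻¹ hy5
      rwa [inv_smul_smul₀ hne] at this
  -- W 5 = ⊤, hence hilb Z 5 = card Z
  have htop : W 5 = ⊤ := by
    rw [eq_top_iff]
    intro x _
    have hx : x = ∑ Q : ↥Z, Pi.single Q (x Q) := by
      funext z
      rw [Finset.sum_apply]
      simp [Pi.single_apply, eq_comm]
    rw [hx]
    refine Submodule.sum_mem _ fun Q _ => ?_
    have : Pi.single Q (x Q) = x Q • (Pi.single Q 1 : ↥Z → ℂ) := by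
      rw [← Pi.single_smul, smul_eq_mul, mul_one]
    rw [this]
    exact Submodule.smul_mem _ _ (hsingle5 Q)
  have h5v : hilb Z 5 = Z.card := by
    rw [hW 5, htop, finrank_top, hN]
  refine ⟨?_, ?_, ?_⟩ <;> omega
end

section
/- Let T ∈ S^4 C^5 have a decomposition A of length r ≤ 13 satisfying: A non-redundant, k_1(A) = 5, k_2(A) = r. Then T has no decomposition of length strictly less than r; thus r is the Waring rank of T. -/
open MvPolynomial

open scoped Classical

noncomputable section
namespace Stmt5Aux

abbrev V5 := Fin 5 → ℂ
abbrev Fn := V5 → ℂ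

def ip (a u : V5) : ℂ := ∑ i, a i * u i

lemma ip_add (a u w : V5) : ip a (u + w) = ip a u + ip a w := by
  simp [ip, mul_add, Finset.sum_add_distrib]

lemma ip_sub (a u w : V5) : ip a (u - w) = ip a u - ip a w := by
  simp [ip, mul_sub, Finset.sum_sub_distrib]

lemma aeval_powForm (d : ℕ) (P : Pn 4) (u : V5) :
    MvPolynomial.aeval u (powForm 4 d P) = (ip P.rep u) ^ d := by
  simp [powForm, ip, map_pow, map_sum, smul_eq_mul]

lemma aeval_eq_eval (u : V5) (f : MvPolynomial (Fin 5) ℂ) :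
    MvPolynomial.aeval u f = MvPolynomial.eval u f := by
  rw [MvPolynomial.aeval_def, MvPolynomial.eval]
  simp [MvPolynomial.coe_eval₂Hom]

def ev : MvPolynomial (Fin 5) ℂ →ₗ[ℂ] Fn :=
  LinearMap.pi fun u : V5 => (MvPolynomial.aeval u).toLinearMap

lemma ev_apply (f : MvPolynomial (Fin 5) ℂ) (u : V5) :
    ev f u = MvPolynomial.aeval u f := rfl

lemma ker_ev : LinearMap.ker ev = ⊥ := by
  rw [LinearMap.ker_eq_bot']
  intro f hf
  apply MvPolynomial.funext (q := 0)
  intro x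
  have := congrFun hf x
  simpa [ev_apply, aeval_eq_eval] using this

/-- The function `u ↦ ⟨P.rep, u⟩²`, the "square function" of the point `P`. -/
def qf (P : Pn 4) : Fn := ev (powForm 4 2 P)

lemma qf_apply (P : Pn 4) (u : V5) : qf P u = (ip P.rep u) ^ 2 := by
  rw [qf, ev_apply, aeval_powForm]

/-- The key catalecticant-style lower bound: if `A` is a nonredundant
decomposition of `T` whose second Veronese image is linearly independent, then
every decomposition of `T` has length at least `A.card`. -/
theorem key (T : MvPolynomial (Fin 5) ℂ) (A : Finset (Pn 4))
    (hi : nonRedundant 4 4 A T) (hk2 : kruskalGe 4 2 A A.card)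
    (B : Finset (Pn 4)) (hB : computes 4 4 B T) : A.card ≤ B.card := by
  classical
  -- extract a representation of T with support A
  have h1 : T ∈ Submodule.span ℂ (Set.range fun P : ↥A => powForm 4 4 P.1) := by
    have h := hi.1; rw [computes, Set.image_eq_range] at h; exact h
  rw [Submodule.mem_span_range_iff_exists_fun ℂ] at h1
  obtain ⟨c, hc⟩ := h1
  -- all coefficients are nonzero by nonredundancy
  have hcne : ∀ P : ↥A, c P ≠ 0 := by
    intro P0 h0
    refine hi.2 (A.erase P0.1) (Finset.erase_ssubset P0.2) ?_
    rw [computes, ← hc]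
    refine Submodule.sum_mem _ fun P _ => ?_
    by_cases hP : P = P0
    · subst hP; rw [h0, zero_smul]; exact Submodule.zero_mem _
    · refine Submodule.smul_mem _ _ (Submodule.subset_span ⟨P.1, ?_, rfl⟩)
      simp only [Finset.coe_erase, Set.mem_diff, Set.mem_singleton_iff]
      exact ⟨P.2, fun h => hP (Subtype.ext h)⟩
  -- representation from B
  have h2 : T ∈ Submodule.span ℂ (Set.range fun Q : ↥B => powForm 4 4 Q.1) := by
    have h := hB; rw [computes, Set.image_eq_range] at h; exact h
  rw [Submodule.mem_span_range_iff_exists_fun ℂ] at h2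
  obtain ⟨d, hd⟩ := h2
  -- evaluation expansions
  have expandA : ∀ v : V5, MvPolynomial.aeval v T
      = ∑ P : ↥A, c P * (ip P.1.rep v) ^ 4 := by
    intro v; rw [← hc]
    simp [map_sum, aeval_powForm, smul_eq_mul]
  have expandB : ∀ v : V5, MvPolynomial.aeval v T
      = ∑ Q : ↥B, d Q * (ip Q.1.rep v) ^ 4 := by
    intro v; rw [← hd]
    simp [map_sum, aeval_powForm, smul_eq_mul]
  -- the slice functions
  set Slice : V5 → Fn := fun u w =>
    MvPolynomial.aeval (u + w) T + MvPolynomial.aeval (u - w) T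
      - 2 * MvPolynomial.aeval u T - 2 * MvPolynomial.aeval w T with hSlice
  have sliceA : ∀ u : V5, Slice u
      = ∑ P : ↥A, (12 * c P * (ip P.1.rep u) ^ 2) • qf P.1 := by
    intro u; funext w
    simp only [hSlice, expandA, ip_add, ip_sub, Finset.sum_apply, Pi.smul_apply,
      qf_apply, smul_eq_mul, Finset.mul_sum, ← Finset.sum_sub_distrib,
      ← Finset.sum_add_distrib]
    exact Finset.sum_congr rfl fun P _ => by ring
  have sliceB : ∀ u : V5, Slice u
      = ∑ Q : ↥B, (12 * d Q * (ip Q.1.rep u) ^ 2) • qf Q.1 := by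
    intro u; funext w
    simp only [hSlice, expandB, ip_add, ip_sub, Finset.sum_apply, Pi.smul_apply,
      qf_apply, smul_eq_mul, Finset.mul_sum, ← Finset.sum_sub_distrib,
      ← Finset.sum_add_distrib]
    exact Finset.sum_congr rfl fun Q _ => by ring
  -- span of the squares of B
  set WB : Submodule ℂ Fn := Submodule.span ℂ (qf '' ↑B) with hWB
  have hsliceWB : ∀ u : V5, Slice u ∈ WB := by
    intro u
    rw [sliceB u]
    exact Submodule.sum_mem _ fun Q _ => Submodule.smul_mem _ _
      (Submodule.subset_span ⟨Q.1, Q.2, rfl⟩)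
  -- linear independence of the squares of A
  have li2 : LinearIndependent ℂ (fun P : ↥A => powForm 4 2 P.1) :=
    hk2 A subset_rfl le_rfl
  have li_qf : LinearIndependent ℂ (fun P : ↥A => qf P.1) := by
    have := li2.map' ev ker_ev
    exact this
  -- the vectors of squared evaluations span everything
  have hU : Submodule.span ℂ
      (Set.range fun u : V5 => (fun P : ↥A => (ip P.1.rep u) ^ 2 : ↥A → ℂ)) = ⊤ := by
    by_contra hne
    obtain ⟨φ, hφ0, hφ⟩ := Submodule.exists_dual_map_eq_bot_of_lt_top
      (lt_top_iff_ne_top.2 hne) inferInstance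
    have hφv : ∀ u : V5, φ (fun P : ↥A => (ip P.1.rep u) ^ 2) = 0 := by
      intro u
      have : φ (fun P : ↥A => (ip P.1.rep u) ^ 2) ∈ Submodule.map φ
          (Submodule.span ℂ (Set.range fun u : V5 =>
            (fun P : ↥A => (ip P.1.rep u) ^ 2 : ↥A → ℂ))) :=
        ⟨_, Submodule.subset_span ⟨u, rfl⟩, rfl⟩
      rw [hφ] at this
      exact this
    have hrep : ∀ x : ↥A → ℂ, φ x = ∑ P : ↥A, x P * φ (Pi.single P 1) := by
      intro x
      conv_lhs => rw [pi_eq_sum_univ x]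
      rw [map_sum]
      refine Finset.sum_congr rfl fun P _ => ?_
      have hs : (fun j => if P = j then (1:ℂ) else 0) = Pi.single P 1 := by
        funext j
        simp [Pi.single_apply, eq_comm]
      rw [map_smul, smul_eq_mul, hs]
    have hg : (∑ P : ↥A, φ (Pi.single P 1) • powForm 4 2 P.1) = 0 := by
      apply MvPolynomial.funext (q := 0)
      intro x
      rw [map_zero, ← aeval_eq_eval]
      have h := hφv x
      rw [hrep] at h
      simpa [map_sum, aeval_powForm, smul_eq_mul, mul_comm] using h
    have hz : ∀ P : ↥A, φ (Pi.single P 1) = 0 :=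
      Fintype.linearIndependent_iff.1 li2 _ hg
    apply hφ0
    apply LinearMap.ext
    intro x
    rw [hrep]
    simp [hz]
  -- the linear map H
  set H : (↥A → ℂ) →ₗ[ℂ] Fn :=
    ∑ P : ↥A, LinearMap.smulRight (LinearMap.proj P) ((12 * c P) • qf P.1) with hH
  have Happly : ∀ x : ↥A → ℂ, H x = ∑ P : ↥A, x P • ((12 * c P) • qf P.1) := by
    intro x
    rw [hH]
    simp [LinearMap.sum_apply]
  have HinWB : ∀ x : ↥A → ℂ, H x ∈ WB := by
    intro x
    have hx : x ∈ Submodule.span ℂ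
        (Set.range fun u : V5 => (fun P : ↥A => (ip P.1.rep u) ^ 2 : ↥A → ℂ)) := by
      rw [hU]; trivial
    refine Submodule.span_induction ?_ ?_ ?_ ?_ hx
    · rintro _ ⟨u, rfl⟩
      have : H (fun P : ↥A => (ip P.1.rep u) ^ 2) = Slice u := by
        rw [Happly, sliceA u]
        exact Finset.sum_congr rfl fun P _ => by
          rw [smul_smul]; ring_nf
      rw [this]
      exact hsliceWB u
    · rw [map_zero]; exact Submodule.zero_mem _
    · intro y z _ _ hy hz; rw [map_add]; exact Submodule.add_mem _ hy hz
    · intro a y _ hy; rw [map_smul]; exact Submodule.smul_mem _ _ hy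
  -- each square of A lies in WB
  have hAinWB : ∀ P0 : ↥A, qf P0.1 ∈ WB := by
    intro P0
    have h12 : (12 : ℂ) * c P0 ≠ 0 :=
      mul_ne_zero (by norm_num) (hcne P0)
    have hkey : H ((12 * c P0)⁻¹ • (Pi.single P0 1 : ↥A → ℂ)) = qf P0.1 := by
      rw [Happly]
      rw [Finset.sum_eq_single P0]
      · simp only [Pi.smul_apply, Pi.single_eq_same, smul_eq_mul, mul_one, smul_smul]
        rw [inv_mul_cancel₀ h12, one_smul]
      · intro P _ hP
        simp [Pi.single_eq_of_ne hP]
      · intro h; exact absurd (Finset.mem_univ P0) h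
    rw [← hkey]
    exact HinWB _
  -- finrank comparison
  have hspanle : Submodule.span ℂ (Set.range fun P : ↥A => qf P.1) ≤ WB := by
    rw [Submodule.span_le]
    rintro _ ⟨P0, rfl⟩
    exact hAinWB P0
  have hWBfin : FiniteDimensional ℂ WB := by
    rw [hWB, ← Finset.coe_image]
    infer_instance
  have h3 : Module.finrank ℂ (Submodule.span ℂ (Set.range fun P : ↥A => qf P.1))
      = A.card := by
    rw [finrank_span_eq_card li_qf, Fintype.card_coe]
  have h4 : Module.finrank ℂ WB ≤ B.card := by
    rw [hWB, ← Finset.coe_image]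
    exact le_trans (finrank_span_finset_le_card _) (Finset.card_image_le)
  calc A.card = Module.finrank ℂ
        (Submodule.span ℂ (Set.range fun P : ↥A => qf P.1)) := h3.symm
    _ ≤ Module.finrank ℂ WB := Submodule.finrank_mono hspanle
    _ ≤ B.card := h4

end Stmt5Aux
end



/-- A quartic `T ∈ S⁴ℂ⁵` with a decomposition `A` of length
`r ≤ 13` satisfying (i) non-redundancy, (ii) `k₁(A)=5`, (iii) `k₂(A)=r`, has no
decomposition of length `< r`; so `r` is the Waring rank of `T`. -/
theorem stmt5 (r : ℕ) (hr : r ≤ 13) (T : MvPolynomial (Fin 5) ℂ)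
    (hT : T.IsHomogeneous 4) (A : Finset (Pn 4)) (hcard : A.card = r)
    (hi : nonRedundant 4 4 A T) (hk1 : kruskalGe 4 1 A 5) (hk2 : kruskalGe 4 2 A r) :
    (∀ B : Finset (Pn 4), computes 4 4 B T → r ≤ B.card) ∧ waringRank 4 4 T = r := by
  subst hcard
  refine ⟨fun B hB => Stmt5Aux.key T A hi hk2 B hB, ?_⟩
  rw [waringRank]
  apply le_antisymm
  · exact Nat.sInf_le ⟨A, rfl, hi.1⟩
  · refine le_csInf ⟨A.card, A, rfl, hi.1⟩ ?_
    rintro k ⟨B, rfl, hBk⟩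
    exact Stmt5Aux.key T A hi hk2 B hBk
end

section
/- Let Z = A ∪ B ⊂ P^4 be a disjoint union of two sets of 12 points each, satisfying CB(4), with Dh_Z(0) = 1, Dh_Z(1) = 4, Dh_Z(2) ≥ 7. Then Dh_Z(2) = 7 and h_Z(3) ≤ 19. -/
open MvPolynomial

open scoped Classical


open Module Submodule LinearMap

-- the pairing map
noncomputable def Lmap {α : Type} [Fintype α] (t : α → ℂ) :
    (α → ℂ) →ₗ[ℂ] Module.Dual ℂ (α → ℂ) :=
  LinearMap.mk₂ ℂ (fun w u => ∑ P, t P * w P * u P)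
    (fun w w' u => by simp [mul_add, add_mul, Finset.sum_add_distrib])
    (fun c w u => by simp only [Pi.smul_apply, smul_eq_mul, Finset.mul_sum]; exact Finset.sum_congr rfl fun _ _ => by ring)
    (fun w u u' => by simp [mul_add, Finset.sum_add_distrib])
    (fun c w u => by simp only [Pi.smul_apply, smul_eq_mul, Finset.mul_sum]; exact Finset.sum_congr rfl fun _ _ => by ring)

lemma Lmap_apply {α : Type} [Fintype α] (t w u : α → ℂ) :
    Lmap t w u = ∑ P, t P * w P * u P := rfl

lemma key_ineq {n : ℕ} (Z : Finset (Pn n)) {i j k : ℕ} (hjk : j + k = i) (hCB : CB Z i) :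
    hilb Z j + hilb Z k ≤ Z.card := by
  set U : ℕ → Submodule ℂ (Z → ℂ) := fun d => LinearMap.range (evalMap Z d) with hU
  -- Step 0: single not in range
  have hsingle : ∀ P : Z, Pi.single P (1:ℂ) ∉ U i := by
    rintro P ⟨⟨f, hf⟩, hfe⟩
    have hvan : ∀ Q ∈ Z, Q ≠ P.1 → evalAt (Q : Pn n).rep f = 0 := by
      intro Q hQ hQP
      have h1 : evalMap Z i ⟨f, hf⟩ ⟨Q, hQ⟩ = (Pi.single P 1 : (z : Z) → ℂ) ⟨Q, hQ⟩ := by rw [hfe]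
      have h2 : (⟨Q, hQ⟩ : Z) ≠ P := fun h => hQP (congrArg Subtype.val h)
      rw [Pi.single_eq_of_ne h2] at h1
      exact h1
    have := hCB P.1 P.2 f hf hvan
    have h1 : evalMap Z i ⟨f, hf⟩ P = (Pi.single P 1 : (z : Z) → ℂ) P := by rw [hfe]
    rw [Pi.single_eq_same] at h1
    exact one_ne_zero (h1.symm.trans this)
  -- Step 1: for each P, a functional in the dual annihilator nonzero on single P 1
  have hstep1 : ∀ P : Z, ∃ φ ∈ (U i).dualAnnihilator, φ (Pi.single P (1:ℂ)) ≠ 0 := by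
    intro P
    have hx : (U i).mkQ (Pi.single P (1:ℂ)) ≠ 0 := by
      rw [Submodule.mkQ_apply, ne_eq, Submodule.Quotient.mk_eq_zero]
      exact hsingle P
    have : ¬ (∀ ψ : Module.Dual ℂ ((Z → ℂ) ⧸ U i), ψ ((U i).mkQ (Pi.single P (1:ℂ))) = 0) := by
      rw [Module.forall_dual_apply_eq_zero_iff ℂ]
      exact hx
    push_neg at this
    obtain ⟨ψ, hψ⟩ := this
    refine ⟨ψ.comp (U i).mkQ, ?_, hψ⟩
    rw [Submodule.mem_dualAnnihilator]
    intro w hw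
    have hz : ((U i).mkQ) w = 0 := by
      rw [Submodule.mkQ_apply, Submodule.Quotient.mk_eq_zero]; exact hw
    simp [hz]
  -- Step 2: a single functional nonzero on all single P 1
  have hstep2 : ∃ φ ∈ (U i).dualAnnihilator, ∀ P : Z, φ (Pi.single P (1:ℂ)) ≠ 0 := by
    have main : ∀ S : Finset Z, ∃ φ ∈ (U i).dualAnnihilator,
        ∀ P ∈ S, φ (Pi.single P (1:ℂ)) ≠ 0 := by
      intro S
      induction S using Finset.induction_on with
      | empty => exact ⟨0, Submodule.zero_mem _, by simp⟩
      | @insert P S hP ih =>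
        obtain ⟨φ, hφD, hφ⟩ := ih
        obtain ⟨ψ, hψD, hψ⟩ := hstep1 P
        obtain ⟨c, hc⟩ := Infinite.exists_notMem_finset
          ((insert P S).image (fun Q => -(φ (Pi.single Q (1:ℂ))) / ψ (Pi.single Q (1:ℂ))))
        refine ⟨φ + c • ψ, Submodule.add_mem _ hφD (Submodule.smul_mem _ _ hψD), ?_⟩
        intro Q hQ
        simp only [LinearMap.add_apply, LinearMap.smul_apply, smul_eq_mul]
        set a := φ (Pi.single Q (1:ℂ))
        set b := ψ (Pi.single Q (1:ℂ))
        by_cases hb : b = 0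
        · have hQS : Q ∈ S := by
            rcases Finset.mem_insert.mp hQ with h | h
            · exact absurd (h ▸ hb) hψ
            · exact h
          simpa [hb] using hφ Q hQS
        · intro hcon
          apply hc
          rw [Finset.mem_image]
          refine ⟨Q, hQ, ?_⟩
          show -a / b = c
          rw [div_eq_iff hb]
          linear_combination -hcon
    exact main Finset.univ |>.imp (fun φ h => ⟨h.1, fun P => h.2 P (Finset.mem_univ P)⟩)
  obtain ⟨φ, hφD, hφ⟩ := hstep2
  set t : Z → ℂ := fun P => φ (Pi.single P (1:ℂ)) with ht
  -- φ as a sum formula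
  have hφsum : ∀ u : Z → ℂ, φ u = ∑ P, u P * t P := by
    intro u
    conv_lhs => rw [← Finset.univ_sum_single u]
    rw [map_sum]
    refine Finset.sum_congr rfl fun P _ => ?_
    have hps : (Pi.single P (u P) : (z : Z) → ℂ) = u P • (Pi.single P 1 : (z : Z) → ℂ) := by
      funext Q
      rcases eq_or_ne Q P with rfl | h
      · simp
      · simp [Pi.single_eq_of_ne h]
    rw [hps, map_smul, smul_eq_mul, ht]
  -- the map L
  have hLinj : Function.Injective (Lmap t) := by
    rw [injective_iff_map_eq_zero]
    intro w hw
    funext P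
    have := congrArg (fun ψ : Module.Dual ℂ (Z → ℂ) => ψ (Pi.single P (1:ℂ))) hw
    simp only [Lmap_apply, LinearMap.zero_apply] at this
    rw [Finset.sum_eq_single P (fun Q _ hQP => by simp [Pi.single_eq_of_ne hQP])
      (by simp)] at this
    simp only [Pi.single_eq_same, mul_one] at this
    rcases mul_eq_zero.mp this with h | h
    · exact absurd h (hφ P)
    · exact h
  -- L maps U k into dualAnnihilator (U j)
  have hLmap : (U k).map (Lmap t) ≤ (U j).dualAnnihilator := by
    rintro _ ⟨w, ⟨⟨g, hg⟩, rfl⟩, rfl⟩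
    rw [Submodule.mem_dualAnnihilator]
    rintro _ ⟨⟨f, hf⟩, rfl⟩
    have hmem : g * f ∈ Rdeg n i := by
      rw [MvPolynomial.mem_homogeneousSubmodule] at hg hf ⊢
      have := hg.mul hf
      rwa [show k + j = i by omega] at this
    have hann : φ (evalMap Z i ⟨g * f, hmem⟩) = 0 :=
      (Submodule.mem_dualAnnihilator φ).mp hφD _ ⟨⟨g * f, hmem⟩, rfl⟩
    rw [hφsum] at hann
    rw [Lmap_apply, ← hann]
    refine Finset.sum_congr rfl fun P _ => ?_
    show t P * evalAt (P : Pn n).rep g * evalAt (P : Pn n).rep f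
        = evalAt (P : Pn n).rep (g * f) * t P
    have : evalAt (P : Pn n).rep (g * f)
        = evalAt (P : Pn n).rep g * evalAt (P : Pn n).rep f := by
      simp [evalAt]
    rw [this]; ring
  -- conclude with dimensions
  have h1 : hilb Z k = finrank ℂ ((U k).map (Lmap t)) :=
    LinearEquiv.finrank_eq ((U k).equivMapOfInjective (Lmap t) hLinj)
  have h2 : finrank ℂ ((U k).map (Lmap t)) ≤ finrank ℂ (U j).dualAnnihilator :=
    Submodule.finrank_mono hLmap
  have h3 : finrank ℂ (U j) + finrank ℂ (U j).dualAnnihilator = finrank ℂ (Z → ℂ) := by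
    have := Subspace.quotEquivAnnihilator (U j)
    have h4 := LinearEquiv.finrank_eq this
    have h5 := Submodule.finrank_quotient_add_finrank (U j)
    omega
  have h6 : finrank ℂ (Z → ℂ) = Z.card := by
    rw [Module.finrank_pi, Fintype.card_coe]
  have h7 : hilb Z j = finrank ℂ (U j) := rfl
  omega


/-- For `Z = A ∪ B ⊂ ℙ⁴` a disjoint union of two `12`-point sets
satisfying `CB(4)` with `Dh_Z(0)=1`, `Dh_Z(1)=4`, `Dh_Z(2) ≥ 7`: then `Dh_Z(2)=7`
and `h_Z(3) ≤ 19`. -/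
theorem stmt10 (A B : Finset (Pn 4)) (hd : Disjoint A B) (hA : A.card = 12)
    (hB : B.card = 12) (hCB : CB (A ∪ B) 4) (h0 : Dh (A ∪ B) 0 = 1)
    (h1 : Dh (A ∪ B) 1 = 4) (h2 : 7 ≤ Dh (A ∪ B) 2) :
    Dh (A ∪ B) 2 = 7 ∧ hilb (A ∪ B) 3 ≤ 19 := by
  have hcard : (A ∪ B).card = 24 := by
    rw [Finset.card_union_of_disjoint hd, hA, hB]
  have h22 : hilb (A ∪ B) 2 + hilb (A ∪ B) 2 ≤ 24 := by
    have := key_ineq (A ∪ B) (i := 4) (j := 2) (k := 2) rfl hCB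
    omega
  have h13 : hilb (A ∪ B) 1 + hilb (A ∪ B) 3 ≤ 24 := by
    have := key_ineq (A ∪ B) (i := 4) (j := 1) (k := 3) rfl hCB
    omega
  have e0 : Dh (A ∪ B) 0 = hilb (A ∪ B) 0 := rfl
  have e1 : Dh (A ∪ B) 1 = hilb (A ∪ B) 1 - hilb (A ∪ B) 0 := rfl
  have e2 : Dh (A ∪ B) 2 = hilb (A ∪ B) 2 - hilb (A ∪ B) 1 := rfl
  omega
end

section
/- Let A ⊂ P^4 be a set of 13 points satisfying: k_1(A) = 5, k_2(A) = 13, and every subset of length ≤ 11 has finite quadric base locus of length ≤ 16. Then the span of v_4(A) contains no form of rank ≤ 11 outside the spans of images of subsets of A of length 11. -/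
open MvPolynomial

open scoped Classical



lemma pderiv_sum_smul_X {σ : Type*} [Fintype σ] [DecidableEq σ] (v : σ → ℂ) (a : σ) :
    pderiv a (∑ k, v k • X k : MvPolynomial σ ℂ) = C (v a) := by
  rw [map_sum]
  simp [MvPolynomial.smul_eq_C_mul, Pi.single_apply, Finset.sum_ite_eq']

lemma pderiv_pderiv_pow4 {σ : Type*} [Fintype σ] [DecidableEq σ] (v : σ → ℂ) (i j : σ) :
    pderiv i (pderiv j ((∑ k, v k • X k : MvPolynomial σ ℂ) ^ 4)) =
      (12 * (v i * v j)) • ((∑ k, v k • X k : MvPolynomial σ ℂ) ^ 2) := by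
  set L : MvPolynomial σ ℂ := ∑ k, v k • X k with hL
  have h4 : pderiv j (L ^ 4) = (4 : ℕ) • (L ^ 3 * C (v j)) := by
    rw [Derivation.leibniz_pow, pderiv_sum_smul_X, smul_eq_mul]
  rw [h4, map_nsmul, Derivation.leibniz, pderiv_C, Derivation.leibniz_pow,
    pderiv_sum_smul_X]
  simp only [smul_eq_mul, MvPolynomial.smul_eq_C_mul, map_mul, map_ofNat]
  push_cast
  ring

lemma pow2_expand {σ : Type*} [Fintype σ] (v : σ → ℂ) :
    ((∑ k, v k • X k : MvPolynomial σ ℂ) ^ 2)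
      = ∑ p : σ × σ, (v p.1 * v p.2) • (X p.1 * X p.2 : MvPolynomial σ ℂ) := by
  rw [sq, Finset.sum_mul_sum, Fintype.sum_prod_type]
  refine Finset.sum_congr rfl fun i _ => Finset.sum_congr rfl fun j _ => ?_
  show v i • X i * v j • X j = (v i * v j) • (X i * X j)
  rw [smul_mul_smul_comm]

open Matrix in
lemma core (A0 B : Finset (Pn 4))
    (li : LinearIndependent ℂ (fun P : {x // x ∈ A0} => powForm 4 2 P.1))
    (l m : Pn 4 → ℂ) (hl : ∀ P ∈ A0, l P ≠ 0)
    (heq : ∑ P ∈ A0, l P • powForm 4 4 P = ∑ Q ∈ B, m Q • powForm 4 4 Q) :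
    A0.card ≤ B.card := by
  classical
  set V : Submodule ℂ (MvPolynomial (Fin 5) ℂ) :=
    Submodule.span ℂ ↑(B.image (powForm 4 2)) with hV
  -- Step 1: catalecticant relations
  have key : ∀ i j : Fin 5,
      (∑ P ∈ A0.attach, (l P.1 * (P.1.rep i * P.1.rep j)) • powForm 4 2 P.1) ∈ V := by
    intro i j
    have h := congrArg (fun p => pderiv i (pderiv j p)) heq
    simp only [map_sum, Derivation.map_smul, powForm, pderiv_pderiv_pow4, smul_smul] at h
    have hmem : (∑ Q ∈ B, (m Q * (12 * (Q.rep i * Q.rep j))) •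
        ((∑ k, Q.rep k • X k : MvPolynomial (Fin 5) ℂ) ^ 2)) ∈ V := by
      refine Submodule.sum_mem _ fun Q hQ => Submodule.smul_mem _ _ (Submodule.subset_span ?_)
      simp only [Finset.coe_image, Set.mem_image, Finset.mem_coe]
      exact ⟨Q, hQ, rfl⟩
    rw [← h] at hmem
    have h12 : (12 : ℂ) • (∑ P ∈ A0.attach, (l P.1 * (P.1.rep i * P.1.rep j)) • powForm 4 2 P.1)
        = ∑ P ∈ A0, (l P * (12 * (P.rep i * P.rep j))) •
          ((∑ k, P.rep k • X k : MvPolynomial (Fin 5) ℂ) ^ 2) := by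
      rw [Finset.smul_sum]
      rw [Finset.sum_attach A0
        (fun P => (12 : ℂ) • ((l P * (P.rep i * P.rep j)) • powForm 4 2 P))]
      refine Finset.sum_congr rfl fun P _ => ?_
      rw [smul_smul, powForm]
      congr 1
      ring
    have h12' : (12 : ℂ) •
        (∑ P ∈ A0.attach, (l P.1 * (P.1.rep i * P.1.rep j)) • powForm 4 2 P.1) ∈ V := by
      rw [h12]; exact hmem
    exact (Submodule.smul_mem_iff V (by norm_num : (12 : ℂ) ≠ 0)).mp h12'
  -- Step 2: the evaluation matrix is surjective
  set M : Matrix {x // x ∈ A0} (Fin 5 × Fin 5) ℂ :=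
    fun P ij => P.1.rep ij.1 * P.1.rep ij.2 with hM
  have hinj : Function.Injective Mᵀ.mulVecLin := by
    rw [← LinearMap.ker_eq_bot, Submodule.eq_bot_iff]
    intro t ht
    rw [LinearMap.mem_ker] at ht
    have hz : ∀ ij : Fin 5 × Fin 5,
        (∑ P : {x // x ∈ A0}, t P * (P.1.rep ij.1 * P.1.rep ij.2)) = 0 := by
      intro ij
      have := congrFun ht ij
      simpa [Matrix.mulVecLin_apply, Matrix.mulVec, dotProduct, Matrix.transpose_apply,
        hM, mul_comm, Matrix.transpose, Matrix.of_apply] using this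
    have hsum : (∑ P : {x // x ∈ A0}, t P • powForm 4 2 P.1) = 0 := by
      simp only [powForm, pow2_expand, Finset.smul_sum, smul_smul]
      rw [Finset.sum_comm]
      refine Finset.sum_eq_zero fun p _ => ?_
      rw [← Finset.sum_smul]
      convert zero_smul ℂ (X p.1 * X p.2 : MvPolynomial (Fin 5) ℂ) using 2
      rw [← hz p]
    have hzero := Fintype.linearIndependent_iff.mp li t hsum
    funext P; exact hzero P
  have hrankT : Mᵀ.rank = A0.card := by
    unfold Matrix.rank
    rw [LinearMap.finrank_range_of_inj hinj, Module.finrank_pi, Fintype.card_coe]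
  have hrank : M.rank = A0.card := by rw [← Matrix.rank_transpose, hrankT]
  have hsurj : Function.Surjective M.mulVecLin := by
    rw [← LinearMap.range_eq_top]
    apply Submodule.eq_top_of_finrank_eq
    rw [Module.finrank_pi, Fintype.card_coe]
    exact hrank
  -- Step 3: each square of A0 lies in V
  have hpf2 : ∀ P0 : {x // x ∈ A0}, powForm 4 2 P0.1 ∈ V := by
    intro P0
    obtain ⟨v, hv⟩ := hsurj (Pi.single P0 1)
    have hsum : (∑ ij : Fin 5 × Fin 5, v ij •
        (∑ P ∈ A0.attach, (l P.1 * (P.1.rep ij.1 * P.1.rep ij.2)) • powForm 4 2 P.1)) ∈ V :=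
      Submodule.sum_mem _ fun ij _ => Submodule.smul_mem _ _ (key ij.1 ij.2)
    have hre : (∑ ij : Fin 5 × Fin 5, v ij •
        (∑ P ∈ A0.attach, (l P.1 * (P.1.rep ij.1 * P.1.rep ij.2)) • powForm 4 2 P.1))
        = l P0.1 • powForm 4 2 P0.1 := by
      simp only [Finset.smul_sum, smul_smul]
      rw [Finset.sum_comm]
      have hterm : ∀ P ∈ A0.attach,
          (∑ ij : Fin 5 × Fin 5,
            (v ij * (l P.1 * (P.1.rep ij.1 * P.1.rep ij.2))) • powForm 4 2 P.1)
          = (l P.1 * Pi.single (M := fun _ => ℂ) P0 1 P) • powForm 4 2 P.1 := by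
        intro P _
        rw [← Finset.sum_smul]
        congr 1
        have hmv := congrFun hv P
        rw [Matrix.mulVecLin_apply] at hmv
        rw [Matrix.mulVec, dotProduct] at hmv
        rw [← hmv, Finset.mul_sum]
        refine Finset.sum_congr rfl fun ij _ => ?_
        simp only [hM]
        ring
      rw [Finset.sum_congr rfl hterm]
      rw [Finset.sum_eq_single P0]
      · simp
      · intro P _ hne
        rw [Pi.single_apply, if_neg hne, mul_zero, zero_smul]
      · intro h; exact absurd (Finset.mem_attach _ _) h
    rw [hre] at hsum
    exact (Submodule.smul_mem_iff V (hl P0.1 P0.2)).mp hsum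
  -- Step 4: dimension count
  have hfin : FiniteDimensional ℂ V :=
    FiniteDimensional.span_of_finite ℂ (Finset.finite_toSet _)
  have li' : LinearIndependent ℂ (fun P : {x // x ∈ A0} => (⟨powForm 4 2 P.1, hpf2 P⟩ : V)) :=
    LinearIndependent.of_comp V.subtype (by exact li)
  have h1 : Fintype.card {x // x ∈ A0} ≤ Module.finrank ℂ V := li'.fintype_card_le_finrank
  have h2 : Module.finrank ℂ V ≤ (B.image (powForm 4 2)).card :=
    finrank_span_finset_le_card _
  calc A0.card = Fintype.card {x // x ∈ A0} := (Fintype.card_coe _).symm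
    _ ≤ Module.finrank ℂ V := h1
    _ ≤ (B.image (powForm 4 2)).card := h2
    _ ≤ B.card := Finset.card_image_le

lemma computes_mono {n d : ℕ} {S S' : Finset (Pn n)} (h : S ⊆ S')
    {T : MvPolynomial (Fin (n + 1)) ℂ} (hc : computes n d S T) : computes n d S' T :=
  Submodule.span_mono (Set.image_mono (Finset.coe_subset.mpr h)) hc

lemma exists_coeffs {n d : ℕ} {S : Finset (Pn n)} {T : MvPolynomial (Fin (n + 1)) ℂ}
    (h : computes n d S T) : ∃ c : Pn n → ℂ, T = ∑ P ∈ S, c P • powForm n d P := by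
  rw [computes] at h
  obtain ⟨c, hsupp, hc⟩ := (Finsupp.mem_span_image_iff_linearCombination ℂ).mp h
  refine ⟨c, ?_⟩
  rw [← hc, Finsupp.linearCombination_apply, Finsupp.sum]
  exact Finset.sum_subset (Finset.coe_subset.mp ((Finsupp.mem_supported ℂ c).mp hsupp))
    fun P _ hP => by rw [Finsupp.notMem_support_iff.mp hP, zero_smul]


/-- For `A` of `13` points with `k₁(A)=5`, `k₂(A)=13` and every
subset of length `≤ 11` having finite quadric base locus of length `≤ 16`: any form
of rank `≤ 11` in the span of `v₄(A)` lies in the span of `v₄` of an `11`-point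
subset of `A`. -/
theorem stmt11 (A : Finset (Pn 4)) (hA : A.card = 13)
    (hk1 : kruskalGe 4 1 A 5) (hk2 : kruskalGe 4 2 A 13)
    (hiv : ∀ A' : Finset (Pn 4), A' ⊆ A → A'.card ≤ 11 →
      (baseLocusQ 4 A').Finite ∧ (baseLocusQ 4 A').ncard ≤ 16) :
    ∀ T : MvPolynomial (Fin 5) ℂ, T.IsHomogeneous 4 → computes 4 4 A T →
      (∃ B : Finset (Pn 4), B.card ≤ 11 ∧ computes 4 4 B T) →
      ∃ A' : Finset (Pn 4), A' ⊆ A ∧ A'.card = 11 ∧ computes 4 4 A' T := by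
  intro T hThom hAcomp hex
  obtain ⟨B, hBcard, hBT⟩ := hex
  obtain ⟨A0, hA0mem, hmin⟩ := Finset.exists_min_image
    (A.powerset.filter fun S => computes 4 4 S T) Finset.card
    ⟨A, Finset.mem_filter.mpr ⟨Finset.mem_powerset.mpr Finset.Subset.rfl, hAcomp⟩⟩
  rw [Finset.mem_filter, Finset.mem_powerset] at hA0mem
  obtain ⟨hA0sub, hA0T⟩ := hA0mem
  by_cases hle : A0.card ≤ 11
  · obtain ⟨A', hs1, hs2, hcard⟩ :=
      Finset.exists_subsuperset_card_eq hA0sub hle (by rw [hA]; norm_num)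
    exact ⟨A', hs2, hcard, computes_mono hs1 hA0T⟩
  · exfalso
    push_neg at hle
    obtain ⟨l, hTeq⟩ := exists_coeffs hA0T
    obtain ⟨m, hTeqB⟩ := exists_coeffs hBT
    have hlne : ∀ P ∈ A0, l P ≠ 0 := by
      intro P hP h0
      have hco : computes 4 4 (A0.erase P) T := by
        rw [computes]
        have hsum : T = ∑ Q ∈ A0.erase P, l Q • powForm 4 4 Q := by
          rw [hTeq, ← Finset.add_sum_erase _ _ hP, h0, zero_smul, zero_add]
        rw [hsum]
        refine Submodule.sum_mem _ fun Q hQ =>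
          Submodule.smul_mem _ _ (Submodule.subset_span ?_)
        exact ⟨Q, Finset.mem_coe.mpr hQ, rfl⟩
      have hcontr := hmin (A0.erase P) (by
        rw [Finset.mem_filter, Finset.mem_powerset]
        exact ⟨(Finset.erase_subset _ _).trans hA0sub, hco⟩)
      rw [Finset.card_erase_of_mem hP] at hcontr
      omega
    have li := hk2 A0 hA0sub (by
      have := Finset.card_le_card hA0sub
      omega)
    have hcore := core A0 B li l m hlne (by rw [← hTeq, ← hTeqB])
    omega
end

section
/- Suppose Z ⊂ P^4 is a finite set of cardinality at most 24 satisfying CB(5), with Dh_Z(0) = 1, Dh_Z(1) = 4, and Dh_Z(2) ≥ 8. Then no such Z exists; i.e., the conditions are contradictory. -/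
open MvPolynomial

open scoped Classical

section AuxLemmas

open Module Submodule

/-- A finite family of nonzero functionals on a `ℂ`-vector space admits a common
non-vanishing point. -/
lemma avoidFunctionals {V : Type*} [AddCommGroup V] [Module ℂ V] {ι : Type*} [Finite ι]
    (f : ι → (V →ₗ[ℂ] ℂ)) (hf : ∀ i, f i ≠ 0) : ∃ v : V, ∀ i, f i v ≠ 0 := by
  by_contra h
  push_neg at h
  have hcov : ⋃ i, ((LinearMap.ker (f i) : Submodule ℂ V) : Set V) = Set.univ := by
    ext v
    simp only [Set.mem_iUnion, SetLike.mem_coe, LinearMap.mem_ker, Set.mem_univ, iff_true]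
    exact h v
  obtain ⟨i, hi⟩ := Subspace.exists_eq_top_of_iUnion_eq_univ hcov
  exact hf i (LinearMap.ker_eq_top.mp hi)

/-- The functional `c ↦ ∑ i, c i * w i` on `Fin m → ℂ`. -/
noncomputable def dotFun (m : ℕ) (w : Fin m → ℂ) : (Fin m → ℂ) →ₗ[ℂ] ℂ where
  toFun c := ∑ i, c i * w i
  map_add' c c' := by simp [add_mul, Finset.sum_add_distrib]
  map_smul' a c := by simp [Finset.mul_sum, mul_assoc]

lemma dotFun_ne_zero {m : ℕ} {w : Fin m → ℂ} (hw : w ≠ 0) : dotFun m w ≠ 0 := by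
  obtain ⟨i, hi⟩ := Function.ne_iff.mp hw
  intro h
  apply hi
  have := congrArg (fun g => g (Pi.single i (1 : ℂ))) h
  simpa [dotFun, Pi.single_apply, ite_mul, Finset.sum_ite_eq'] using this

/-- The pairing functional `φ ↦ ∑ z, φ z * w z` on `Z → ℂ`. -/
noncomputable def pairFun {α : Type*} [Fintype α] (w : α → ℂ) : (α → ℂ) →ₗ[ℂ] ℂ where
  toFun φ := ∑ z, φ z * w z
  map_add' c c' := by simp [add_mul, Finset.sum_add_distrib]
  map_smul' a c := by simp [Finset.mul_sum, mul_assoc]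

end AuxLemmas

set_option synthInstance.maxHeartbeats 1000000
set_option maxHeartbeats 2000000

/-- No finite set `Z ⊂ ℙ⁴` of cardinality `≤ 24` satisfies `CB(5)`
together with `Dh_Z(0)=1`, `Dh_Z(1)=4` and `Dh_Z(2) ≥ 8`. -/
theorem stmt12 (Z : Finset (Pn 4)) (hcard : Z.card ≤ 24) (hCB : CB Z 5)
    (h0 : Dh Z 0 = 1) (h1 : Dh Z 1 = 4) (h2 : 8 ≤ Dh Z 2) : False := by
  classical
  open Module Submodule in
  -- the spaces of values of degree-j forms on Z
  set V : ℕ → Submodule ℂ (↥Z → ℂ) := fun j => LinearMap.range (evalMap Z j) with hV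
  have hev : ∀ (j : ℕ) (f : Rdeg 4 j) (z : ↥Z),
      evalMap Z j f z = MvPolynomial.aeval (z : Pn 4).rep (f : MvPolynomial (Fin 5) ℂ) := by
    intro j f z; rfl
  -- pointwise products of values
  have hmul : ∀ (a b : ℕ) (u v : ↥Z → ℂ), u ∈ V a → v ∈ V b →
      (fun z => u z * v z) ∈ V (a + b) := by
    rintro a b u v ⟨f, rfl⟩ ⟨g, rfl⟩
    refine ⟨⟨(f : MvPolynomial (Fin 5) ℂ) * g, ?_⟩, ?_⟩
    · exact (MvPolynomial.mem_homogeneousSubmodule _ _).mpr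
        (((MvPolynomial.mem_homogeneousSubmodule _ _).mp f.2).mul
          ((MvPolynomial.mem_homogeneousSubmodule _ _).mp g.2))
    · funext z
      simp only [hev, map_mul]
  -- a linear form not vanishing at any representative
  obtain ⟨c, hc⟩ := avoidFunctionals (fun z : ↥Z => dotFun 5 ((z : Pn 4).rep))
    (fun z => dotFun_ne_zero (Projectivization.rep_nonzero _))
  set ℓ : ↥Z → ℂ := fun z => ∑ i, c i * (z : Pn 4).rep i with hℓdef
  have hℓ : ∀ z, ℓ z ≠ 0 := by
    intro z
    have := hc z
    simpa [dotFun, hℓdef] using this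
  set L : MvPolynomial (Fin 5) ℂ := ∑ i, c i • MvPolynomial.X i with hLdef
  have hLmem : L ∈ Rdeg 4 1 :=
    Submodule.sum_mem _ fun i _ => Submodule.smul_mem _ _
      ((MvPolynomial.mem_homogeneousSubmodule _ _).mpr (MvPolynomial.isHomogeneous_X _ _))
  have hLe : ∀ z : ↥Z, MvPolynomial.aeval (z : Pn 4).rep L = ℓ z := by
    intro z
    simp [hLdef, hℓdef, map_sum, smul_eq_mul]
  -- monotonicity of the Hilbert function
  have hmono : ∀ j : ℕ, hilb Z j ≤ hilb Z (j + 1) := by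
    intro j
    set D : (↥Z → ℂ) →ₗ[ℂ] (↥Z → ℂ) := LinearMap.pi (fun z => ℓ z • LinearMap.proj z) with hD
    have hDapp : ∀ (u : ↥Z → ℂ) (z : ↥Z), D u z = ℓ z * u z := by
      intro u z; simp [hD]
    have hDinj : Function.Injective D := by
      intro u v huv
      funext z
      have h' : D u z = D v z := congrFun huv z
      rw [hDapp, hDapp] at h'
      exact mul_left_cancel₀ (hℓ z) h'
    have hmap : (V j).map D ≤ V (j + 1) := by
      rintro _ ⟨_, ⟨f, rfl⟩, rfl⟩
      refine ⟨⟨(f : MvPolynomial (Fin 5) ℂ) * L, ?_⟩, ?_⟩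
      · exact (MvPolynomial.mem_homogeneousSubmodule _ _).mpr
          (((MvPolynomial.mem_homogeneousSubmodule _ _).mp f.2).mul
            ((MvPolynomial.mem_homogeneousSubmodule _ _).mp hLmem))
      · funext z
        show MvPolynomial.aeval (z : Pn 4).rep ((f : MvPolynomial (Fin 5) ℂ) * L)
            = D (evalMap Z j f) z
        rw [hDapp, map_mul, hLe, hev, mul_comm]
    have e1 : finrank ℂ ((V j).map D) ≤ finrank ℂ (V (j + 1)) := Submodule.finrank_mono hmap
    have e2 : finrank ℂ (V j) = finrank ℂ ((V j).map D) :=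
      LinearEquiv.finrank_eq (Submodule.equivMapOfInjective D hDinj (V j))
    exact e2.trans_le e1
  -- the space of functionals annihilating degree-5 values
  set U : Submodule ℂ (↥Z → ℂ) := ⨅ w : V 5, LinearMap.ker (pairFun (w : ↥Z → ℂ)) with hU
  have memU : ∀ φ : ↥Z → ℂ, φ ∈ U ↔ ∀ w ∈ V 5, ∑ z, φ z * w z = 0 := by
    intro φ
    rw [hU]
    simp only [Submodule.mem_iInf, LinearMap.mem_ker]
    constructor
    · intro h w hw; exact h ⟨w, hw⟩
    · rintro h ⟨w, hw⟩; exact h w hw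
  -- Step 1: for each point of Z there is a functional in U not vanishing there
  have step1 : ∀ z₀ : ↥Z, ∃ φ : ↥Z → ℂ, φ ∈ U ∧ φ z₀ ≠ 0 := by
    intro z₀
    by_contra hcon
    push_neg at hcon
    have hsingle : Pi.single z₀ (1 : ℂ) ∈ V 5 := by
      by_contra hnot
      obtain ⟨f, hf0, hfbot⟩ := Submodule.exists_dual_map_eq_bot_of_notMem hnot inferInstance
      set φ : ↥Z → ℂ := fun z => f (Pi.single z 1) with hφ
      have hφU : φ ∈ U := by
        rw [memU]
        intro w hw
        have hw0 : f w = 0 := by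
          have hmem : f w ∈ (V 5).map f := Submodule.mem_map_of_mem hw
          rwa [hfbot, Submodule.mem_bot] at hmem
        have hwexp : w = ∑ z : ↥Z, w z • (Pi.single z (1 : ℂ) : ↥Z → ℂ) := by
          funext j
          simp [Pi.single_apply, Finset.sum_ite_eq]
        calc ∑ z, φ z * w z = ∑ z, w z * φ z := by
              simp [mul_comm]
          _ = f w := by
              conv_rhs => rw [hwexp]
              rw [map_sum]
              simp [hφ]
          _ = 0 := hw0
      exact hf0 (hcon φ hφU)
    obtain ⟨g, hg⟩ := hsingle
    have hvanish : ∀ Q ∈ Z, Q ≠ (z₀ : Pn 4) →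
        evalAt (Q : Pn 4).rep (g : MvPolynomial (Fin 5) ℂ) = 0 := by
      intro Q hQ hne
      have h' : evalMap Z 5 g ⟨Q, hQ⟩ = 0 := by
        rw [hg]
        simp [Pi.single_apply, Subtype.ext_iff, hne]
      exact h'
    have hz := hCB (z₀ : Pn 4) z₀.2 (g : MvPolynomial (Fin 5) ℂ) g.2 hvanish
    have h1' : evalAt (z₀ : Pn 4).rep (g : MvPolynomial (Fin 5) ℂ) = 1 := by
      have h'' : evalMap Z 5 g z₀ = (Pi.single z₀ (1 : ℂ) : ↥Z → ℂ) z₀ := by rw [hg]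
      have h3 : evalMap Z 5 g z₀ = 1 := by simpa using h''
      exact h3
    exact one_ne_zero (h1' ▸ hz)
  -- Step 2: a functional in U with full support
  have hproj : ∀ z : ↥Z, (LinearMap.proj z : (↥Z → ℂ) →ₗ[ℂ] ℂ).comp U.subtype ≠ (0 : ↥U →ₗ[ℂ] ℂ) := by
    intro z h
    obtain ⟨φ, hφU, hφz⟩ := step1 z
    apply hφz
    have := congrArg (fun g : ↥U →ₗ[ℂ] ℂ => g (⟨φ, hφU⟩ : ↥U)) h
    simpa using this
  obtain ⟨φ₀, hφ₀⟩ := avoidFunctionals _ hproj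
  set φ : ↥Z → ℂ := (φ₀ : ↥Z → ℂ) with hφdef
  have hφU : φ ∈ U := φ₀.2
  have hφne : ∀ z, φ z ≠ 0 := by
    intro z
    have := hφ₀ z
    simpa using this
  -- Step 3: the pairing
  set T : (↥Z → ℂ) →ₗ[ℂ] Module.Dual ℂ (↥Z → ℂ) :=
    LinearMap.mk₂ ℂ (fun u v => ∑ z, φ z * (u z * v z))
      (by intro u u' v; simp [mul_add, add_mul, Finset.sum_add_distrib])
      (by intro a u v; simp only [smul_eq_mul, Pi.smul_apply]; rw [Finset.mul_sum]; congr 1; funext z; ring)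
      (by intro u v v'; simp [mul_add, add_mul, Finset.sum_add_distrib])
      (by intro a u v; simp only [smul_eq_mul, Pi.smul_apply]; rw [Finset.mul_sum]; congr 1; funext z; ring) with hT
  have hTapp : ∀ u v : ↥Z → ℂ, T u v = ∑ z, φ z * (u z * v z) := by
    intro u v; rw [hT]; rfl
  have hTsingle : ∀ (u : ↥Z → ℂ) (z : ↥Z), T u (Pi.single z 1) = φ z * u z := by
    intro u z
    rw [hTapp]
    simp [Pi.single_apply, mul_ite, Finset.sum_ite_eq']
  have hTinj : Function.Injective T := by
    intro u v huv
    funext z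
    have h' : T u (Pi.single z 1) = T v (Pi.single z 1) := by rw [huv]
    rw [hTsingle, hTsingle] at h'
    exact mul_left_cancel₀ (hφne z) h'
  have hmapT : (V 2).map T ≤ (V 3).dualAnnihilator := by
    rintro _ ⟨u, hu, rfl⟩
    rw [Submodule.mem_dualAnnihilator]
    intro w hw
    have huw : (fun z => u z * w z) ∈ V 5 := hmul 2 3 u w hu hw
    have h0' := (memU φ).mp hφU _ huw
    rw [hTapp]
    simpa using h0'
  -- dimension count
  have hdim : finrank ℂ (V 2) + finrank ℂ (V 3) ≤ Z.card := by
    have e1 : finrank ℂ (V 2) = finrank ℂ ((V 2).map T) :=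
      LinearEquiv.finrank_eq (Submodule.equivMapOfInjective T hTinj (V 2))
    have e2 : finrank ℂ ((V 2).map T) ≤ finrank ℂ ((V 3).dualAnnihilator) :=
      Submodule.finrank_mono hmapT
    have e3 : finrank ℂ ((V 3).dualAnnihilator) = finrank ℂ ((↥Z → ℂ) ⧸ (V 3)) :=
      (LinearEquiv.finrank_eq (Subspace.quotEquivAnnihilator (V 3))).symm
    have e4 := Submodule.finrank_quotient_add_finrank (V 3)
    have e5 : finrank ℂ (↥Z → ℂ) = Z.card := by
      rw [Module.finrank_pi]; exact Fintype.card_coe Z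
    omega
  -- conclusion
  have hm : Module.finrank ℂ (V 2) ≤ Module.finrank ℂ (V 3) := hmono 2
  have e0 : hilb Z 0 = 1 := h0
  have e1 : hilb Z 1 - hilb Z 0 = 4 := h1
  have e2 : 8 ≤ hilb Z 2 - hilb Z 1 := h2
  have q2 : hilb Z 2 = Module.finrank ℂ (V 2) := rfl
  have q3 : hilb Z 3 = Module.finrank ℂ (V 3) := rfl
  omega
end
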